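/- arXiv:1204.1554 — 11 statements merged into one kernel-verified Lean document; each statement's English description precedes it below -/
import Mathlib

section
/- Let Λ be an extremally disconnected compact Hausdorff space and let (f, W_f) and (g, W_g) be normal functions on Λ. If there exists a subset U of Λ∖(W_f ∪ W_g) which is dense in Λ and satisfies f(x) = g(x) for every x ∈ U, then W_f = W_g and f(x) = g(x) for every x ∈ Λ∖W_f. (Lemma 9) -/
open Filter Topology

/-- A normal function on `Λ` with values in the quaternions: a pair `(f, W)` where
`Λ ∖ W` is open and dense, `f` is continuous on `Λ ∖ W`, and `‖f x‖ → ∞` as `x`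
approaches any point of `W` within `Λ ∖ W`. -/
structure IsNormalFn {Λ : Type*} [TopologicalSpace Λ]
    (f : Λ → Quaternion ℝ) (W : Set Λ) : Prop where
  isOpen_compl : IsOpen Wᶜ
  dense_compl : Dense Wᶜ
  contOn : ContinuousOn f Wᶜ
  tendsto_norm : ∀ y ∈ W, Tendsto (fun x => ‖f x‖) (𝓝[Wᶜ] y) atTop

/-- Lemma 9: two normal functions agreeing on a dense subset of the common domain
coincide (same singular set, same values off it). -/
theorem normalFn_eq_of_eqOn_dense {Λ : Type*} [TopologicalSpace Λ] [CompactSpace Λ]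
    [T2Space Λ] [ExtremallyDisconnected Λ] [Nonempty Λ]
    (f g : Λ → Quaternion ℝ) (Wf Wg : Set Λ)
    (hf : IsNormalFn f Wf) (hg : IsNormalFn g Wg)
    (U : Set Λ) (hU : U ⊆ (Wf ∪ Wg)ᶜ) (hUdense : Dense U)
    (hfg : ∀ x ∈ U, f x = g x) :
    Wf = Wg ∧ ∀ x ∈ Wfᶜ, f x = g x := by
  have hUf : U ⊆ Wfᶜ := fun x hx h => hU hx (Or.inl h)
  have hUg : U ⊆ Wgᶜ := fun x hx h => hU hx (Or.inr h)
  have key : ∀ (f g : Λ → Quaternion ℝ) (Wf Wg : Set Λ),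
      IsNormalFn f Wf → IsNormalFn g Wg → U ⊆ Wfᶜ → U ⊆ Wgᶜ →
      (∀ x ∈ U, f x = g x) → Wf ⊆ Wg := by
    intro f g Wf Wg hf hg hUf hUg hfg y hy
    by_contra hyg
    have hne : (𝓝[U] y).NeBot := mem_closure_iff_nhdsWithin_neBot.mp (hUdense y)
    have h1 : Tendsto (fun x => ‖f x‖) (𝓝[U] y) atTop :=
      (hf.tendsto_norm y hy).mono_left (nhdsWithin_mono y hUf)
    have h2 : Tendsto (fun x => ‖g x‖) (𝓝[U] y) (𝓝 ‖g y‖) :=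
      ((hg.contOn y hyg).norm).mono_left (nhdsWithin_mono y hUg)
    have h3 : Tendsto (fun x => ‖f x‖) (𝓝[U] y) (𝓝 ‖g y‖) := by
      refine Tendsto.congr' ?_ h2
      filter_upwards [self_mem_nhdsWithin] with x hx
      rw [hfg x hx]
    exact not_tendsto_atTop_of_tendsto_nhds h3 h1
  have hW : Wf = Wg := subset_antisymm
    (key f g Wf Wg hf hg hUf hUg hfg)
    (key g f Wg Wf hg hf hUg hUf fun x hx => (hfg x hx).symm)
  refine ⟨hW, fun x hx => ?_⟩
  have hne : (𝓝[U] x).NeBot := mem_closure_iff_nhdsWithin_neBot.mp (hUdense x)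
  have h1 : Tendsto f (𝓝[U] x) (𝓝 (f x)) :=
    (hf.contOn x hx).mono_left (nhdsWithin_mono x hUf)
  have h2 : Tendsto g (𝓝[U] x) (𝓝 (g x)) :=
    (hg.contOn x (hW ▸ hx)).mono_left (nhdsWithin_mono x hUg)
  have h3 : Tendsto f (𝓝[U] x) (𝓝 (g x)) := by
    refine Tendsto.congr' ?_ h2
    filter_upwards [self_mem_nhdsWithin] with z hz
    exact (hfg z hz).symm
  exact tendsto_nhds_unique h1 h3
end

section
/- Let Λ be an extremally disconnected compact Hausdorff space and let θ assign to each bounded Borel function g : Λ → ℍ the unique continuous function θ(g) : Λ → ℍ agreeing with g off a meager set. Then θ is a conjugation-preserving surjective homomorphism from the algebra of bounded Borel ℍ-valued functions onto C(Λ, ℍ): θ(g + h) = θ(g) + θ(h), θ(g·h) = θ(g)·θ(h), θ(a·g·b) = a·θ(g)·b for all constants a, b ∈ ℍ, θ(ḡ) = θ(g)‾ (pointwise quaternionic conjugation), every continuous function Λ → ℍ is in the range of θ, and θ(g) = 0 if and only if g vanishes outside a meager subset of Λ. (Lemma 38, third assertion) -/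
/-- A bounded Borel quaternion-valued function on `Λ` (Borel σ-algebras on both sides). -/
def BddBorel {Λ : Type*} [TopologicalSpace Λ] (g : Λ → Quaternion ℝ) : Prop :=
  (@Measurable Λ (Quaternion ℝ) (borel Λ) (borel (Quaternion ℝ)) g) ∧ ∃ C : ℝ, ∀ x, ‖g x‖ ≤ C

lemma isMeagre_union' {X : Type*} [TopologicalSpace X] {s t : Set X}
    (hs : IsMeagre s) (ht : IsMeagre t) : IsMeagre (s ∪ t) := by
  rw [IsMeagre, Set.compl_union]; exact Filter.inter_mem hs ht

/-- Lemma 38 (third assertion): the map `θ` sending a bounded Borel function to the unique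
continuous function agreeing with it off a meager set is a conjugation-preserving surjective
homomorphism onto `C(Λ, ℍ)` whose kernel consists of the bounded Borel functions vanishing
outside a meager set. -/
theorem theta_hom_properties {Λ : Type*} [TopologicalSpace Λ]
    [CompactSpace Λ] [T2Space Λ] [ExtremallyDisconnected Λ] [Nonempty Λ]
    (θ : (Λ → Quaternion ℝ) → (Λ → Quaternion ℝ))
    (hθ : ∀ g, BddBorel g → Continuous (θ g) ∧ IsMeagre {x | θ g x ≠ g x}) :
    (∀ g h, BddBorel g → BddBorel h → θ (g + h) = θ g + θ h) ∧
    (∀ g h, BddBorel g → BddBorel h → θ (g * h) = θ g * θ h) ∧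
    (∀ g, BddBorel g → ∀ a b : Quaternion ℝ,
      θ (fun x => a * g x * b) = fun x => a * θ g x * b) ∧
    (∀ g, BddBorel g → θ (fun x => star (g x)) = fun x => star (θ g x)) ∧
    (∀ f : Λ → Quaternion ℝ, Continuous f → ∃ g, BddBorel g ∧ θ g = f) ∧
    (∀ g, BddBorel g → (θ g = 0 ↔ IsMeagre {x | g x ≠ 0})) := by
  letI : MeasurableSpace Λ := borel Λ
  haveI : BorelSpace Λ := ⟨rfl⟩
  letI : MeasurableSpace (Quaternion ℝ) := borel _
  haveI : BorelSpace (Quaternion ℝ) := ⟨rfl⟩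
  -- uniqueness: any continuous function agreeing with `g` off a meager set equals `θ g`.
  have uniq : ∀ g, BddBorel g → ∀ f : Λ → Quaternion ℝ, Continuous f →
      IsMeagre {x | f x ≠ g x} → θ g = f := by
    intro g hg f hf hm
    obtain ⟨hc, hmg⟩ := hθ g hg
    have hM : IsMeagre ({x | θ g x ≠ g x} ∪ {x | f x ≠ g x}) := isMeagre_union' hmg hm
    have hd : Dense ({x | θ g x ≠ g x} ∪ {x | f x ≠ g x})ᶜ := dense_of_mem_residual hM
    refine hc.ext_on hd hf ?_
    intro x hx
    simp only [Set.compl_union, Set.mem_inter_iff, Set.mem_compl_iff, Set.mem_setOf_eq,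
      not_not] at hx
    rw [hx.1, hx.2]
  have contBB : ∀ f : Λ → Quaternion ℝ, Continuous f → BddBorel f := by
    intro f hf
    refine ⟨hf.measurable, ?_⟩
    obtain ⟨x₀, -, hx₀⟩ := isCompact_univ.exists_isMaxOn Set.univ_nonempty hf.norm.continuousOn
    exact ⟨‖f x₀‖, fun x => hx₀ (Set.mem_univ x)⟩
  refine ⟨?_, ?_, ?_, ?_, ?_, ?_⟩
  · -- additivity
    intro g h hg hh
    obtain ⟨C, hC⟩ := hg.2
    obtain ⟨D, hD⟩ := hh.2
    have hgh : BddBorel (g + h) := ⟨hg.1.add hh.1, C + D, fun x => by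
      calc ‖g x + h x‖ ≤ ‖g x‖ + ‖h x‖ := norm_add_le _ _
        _ ≤ C + D := add_le_add (hC x) (hD x)⟩
    refine uniq _ hgh _ (((hθ g hg).1).add ((hθ h hh).1)) ?_
    refine (isMeagre_union' (hθ g hg).2 (hθ h hh).2).mono ?_
    intro x hx
    simp only [Set.mem_setOf_eq, Pi.add_apply] at hx
    by_contra hx'
    simp only [Set.mem_union, Set.mem_setOf_eq, not_or, not_not] at hx'
    exact hx (by rw [hx'.1, hx'.2])
  · -- multiplicativity
    intro g h hg hh
    obtain ⟨C, hC⟩ := hg.2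
    obtain ⟨D, hD⟩ := hh.2
    have hC0 : (0:ℝ) ≤ C := le_trans (norm_nonneg _) (hC (Classical.arbitrary Λ))
    have hgh : BddBorel (g * h) := ⟨hg.1.mul hh.1, C * D, fun x => by
      calc ‖g x * h x‖ = ‖g x‖ * ‖h x‖ := norm_mul _ _
        _ ≤ C * D := mul_le_mul (hC x) (hD x) (norm_nonneg _) hC0⟩
    refine uniq _ hgh _ (((hθ g hg).1).mul ((hθ h hh).1)) ?_
    refine (isMeagre_union' (hθ g hg).2 (hθ h hh).2).mono ?_
    intro x hx
    simp only [Set.mem_setOf_eq, Pi.mul_apply] at hx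
    by_contra hx'
    simp only [Set.mem_union, Set.mem_setOf_eq, not_or, not_not] at hx'
    exact hx (by rw [hx'.1, hx'.2])
  · -- θ(a g b) = a θ(g) b
    intro g hg a b
    obtain ⟨C, hC⟩ := hg.2
    have habg : BddBorel (fun x => a * g x * b) := by
      refine ⟨?_, ‖a‖ * C * ‖b‖, fun x => ?_⟩
      · exact ((continuous_const.mul continuous_id).mul continuous_const).measurable.comp hg.1
      · calc ‖a * g x * b‖ = ‖a‖ * ‖g x‖ * ‖b‖ := by rw [norm_mul, norm_mul]
          _ ≤ ‖a‖ * C * ‖b‖ := by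
              gcongr
              exact hC x
    refine uniq _ habg _ ((continuous_const.mul (hθ g hg).1).mul continuous_const) ?_
    refine ((hθ g hg).2).mono ?_
    intro x hx
    simp only [Set.mem_setOf_eq] at hx ⊢
    intro h
    exact hx (by rw [h])
  · -- star
    intro g hg
    have hs : BddBorel (fun x => star (g x)) := by
      obtain ⟨C, hC⟩ := hg.2
      refine ⟨continuous_star.measurable.comp hg.1, C, fun x => ?_⟩
      rw [norm_star]; exact hC x
    refine uniq _ hs _ (continuous_star.comp (hθ g hg).1) ?_
    refine ((hθ g hg).2).mono ?_
    intro x hx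
    simp only [Set.mem_setOf_eq, Function.comp] at hx ⊢
    intro h
    exact hx (by rw [h])
  · -- surjectivity
    intro f hf
    exact ⟨f, contBB f hf, uniq f (contBB f hf) f hf (by simp [IsMeagre, Set.setOf_false])⟩
  · -- kernel
    intro g hg
    constructor
    · intro h0
      have := (hθ g hg).2
      rw [h0] at this
      refine this.mono ?_
      intro x hx
      simp only [Set.mem_setOf_eq, Pi.zero_apply] at hx ⊢
      exact fun h => hx h.symm
    · intro hm
      refine uniq g hg 0 continuous_const (hm.mono ?_)
      intro x hx
      simp only [Set.mem_setOf_eq, Pi.zero_apply] at hx ⊢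
      exact fun h => hx h.symm
end

section
/- Let Λ be an extremally disconnected compact Hausdorff space and let θ assign to each bounded Borel function g : Λ → ℝ the unique continuous function θ(g) : Λ → ℝ agreeing with g off a meager set. If (g_n) is a monotone increasing sequence of bounded Borel real-valued functions on Λ converging pointwise to a bounded Borel function g, then θ(g) is the least upper bound of the sequence (θ(g_n)) in C(Λ, ℝ): θ(g_n)(x) ≤ θ(g)(x) for all n and all x ∈ Λ, and every continuous function h : Λ → ℝ satisfying θ(g_n) ≤ h pointwise for all n satisfies θ(g) ≤ h pointwise. (Lemma 38, σ-normality of θ) -/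
open Filter Topology

/-- A bounded Borel real-valued function on `Λ` (Borel σ-algebra on `Λ`). -/
def BddBorelReal {Λ : Type*} [TopologicalSpace Λ] (g : Λ → ℝ) : Prop :=
  (@Measurable Λ ℝ (borel Λ) _ g) ∧ ∃ C : ℝ, ∀ x, |g x| ≤ C

/-- Lemma 38 (σ-normality of `θ`): if a monotone increasing sequence of bounded Borel
real-valued functions converges pointwise to a bounded Borel function `g`, then `θ g` is the
least upper bound of the `θ (g n)` in `C(Λ, ℝ)`. -/
theorem theta_sigma_normal {Λ : Type*} [TopologicalSpace Λ]
    [CompactSpace Λ] [T2Space Λ] [ExtremallyDisconnected Λ] [Nonempty Λ]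
    (θ : (Λ → ℝ) → (Λ → ℝ))
    (hθ : ∀ g, BddBorelReal g → Continuous (θ g) ∧ IsMeagre {x | θ g x ≠ g x})
    (g : ℕ → Λ → ℝ) (glim : Λ → ℝ)
    (hg : ∀ n, BddBorelReal (g n)) (hglim : BddBorelReal glim)
    (hmono : ∀ n x, g n x ≤ g (n + 1) x)
    (hconv : ∀ x, Tendsto (fun n => g n x) atTop (𝓝 (glim x))) :
    (∀ n x, θ (g n) x ≤ θ glim x) ∧
    (∀ h : Λ → ℝ, Continuous h → (∀ n x, θ (g n) x ≤ h x) → ∀ x, θ glim x ≤ h x) := by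
  have hmono' : ∀ n, Monotone fun m => g m n := fun n =>
    monotone_nat_of_le_succ fun m => hmono m n
  -- the bad set
  set M : Set Λ := {x | θ glim x ≠ glim x} ∪ ⋃ n, {x | θ (g n) x ≠ g n x} with hM
  have hMmeagre : IsMeagre M := by
    rw [IsMeagre, Set.compl_union]
    exact Filter.inter_mem (hθ glim hglim).2 (isMeagre_iUnion fun n => (hθ (g n) (hg n)).2)
  have hdense : Dense Mᶜ := dense_of_mem_residual hMmeagre
  have key : ∀ x ∈ Mᶜ, θ glim x = glim x ∧ ∀ n, θ (g n) x = g n x := by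
    intro x hx
    simp only [hM, Set.compl_union, Set.mem_inter_iff, Set.compl_iUnion,
      Set.mem_iInter, Set.mem_compl_iff, Set.mem_setOf_eq, not_not] at hx
    exact ⟨hx.1, hx.2⟩
  have hle : ∀ n x, g n x ≤ glim x := fun n x =>
    (hmono' x).ge_of_tendsto (hconv x) n
  constructor
  · intro n x
    have hcl : IsClosed {x | θ (g n) x ≤ θ glim x} :=
      isClosed_le (hθ (g n) (hg n)).1 (hθ glim hglim).1
    have hsub : Mᶜ ⊆ {x | θ (g n) x ≤ θ glim x} := by
      intro y hy
      obtain ⟨h1, h2⟩ := key y hy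
      simp only [Set.mem_setOf_eq, h1, h2 n]
      exact hle n y
    have := hcl.closure_subset_iff.mpr hsub
    rw [hdense.closure_eq] at this
    exact this (Set.mem_univ x)
  · intro h hcont hhn x
    have hcl : IsClosed {x | θ glim x ≤ h x} :=
      isClosed_le (hθ glim hglim).1 hcont
    have hsub : Mᶜ ⊆ {x | θ glim x ≤ h x} := by
      intro y hy
      obtain ⟨h1, h2⟩ := key y hy
      simp only [Set.mem_setOf_eq, h1]
      refine le_of_tendsto (hconv y) (Filter.Eventually.of_forall fun n => ?_)
      rw [← h2 n]; exact hhn n y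
    have := hcl.closure_subset_iff.mpr hsub
    rw [hdense.closure_eq] at this
    exact this (Set.mem_univ x)
end

section
/- Let Λ be an extremally disconnected compact Hausdorff space and let (ξ, W_ξ) be a normal function on Λ. Then there exists a continuous function q : Λ → ℍ with |q(x)| = 1 for every x ∈ Λ and q(x)·|ξ(x)| = ξ(x) for every x ∈ Λ∖W_ξ. (polar decomposition of a normal function, established in the proof of Theorem 29) -/
open Filter Topology

/-- Polar decomposition of a normal function (proof of Theorem 29): there is a continuous
unit-norm function `q : Λ → ℍ` with `q x * |ξ x| = ξ x` on the domain of `ξ`. -/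
theorem normalFn_polar_decomposition {Λ : Type*} [TopologicalSpace Λ]
    [CompactSpace Λ] [T2Space Λ] [ExtremallyDisconnected Λ] [Nonempty Λ]
    (ξ : Λ → Quaternion ℝ) (W : Set Λ) (hξ : IsNormalFn ξ W) :
    ∃ q : Λ → Quaternion ℝ, Continuous q ∧ (∀ x, ‖q x‖ = 1) ∧
      ∀ x ∈ Wᶜ, q x * ((‖ξ x‖ : ℝ) : Quaternion ℝ) = ξ x := by
  classical
  -- the open set where `ξ` is defined and nonzero
  set V : Set Λ := Wᶜ ∩ ξ ⁻¹' {0}ᶜ with hV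
  have hVopen : IsOpen V := hξ.contOn.isOpen_inter_preimage hξ.isOpen_compl isOpen_compl_singleton
  set E : Set Λ := (closure V)ᶜ with hE
  have hEopen : IsOpen E := isClosed_closure.isOpen_compl
  set D : Set Λ := V ∪ E with hD
  have hDopen : IsOpen D := hVopen.union hEopen
  have hDdense : Dense D := by
    rw [dense_iff_inter_open]
    intro U hU hUne
    rcases hUne with ⟨x, hx⟩
    by_cases hxc : (U ∩ V).Nonempty
    · exact hxc.mono (Set.inter_subset_inter_right U Set.subset_union_left)
    · refine ⟨x, hx, Or.inr ?_⟩
      intro hxcl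
      have hmem : x ∈ closure (U ∩ V) := hU.inter_closure ⟨hx, hxcl⟩
      exact hxc (closure_nonempty_iff.1 ⟨x, hmem⟩)
  -- the candidate unit function on `D`
  set f : Λ → Quaternion ℝ := fun x => if x ∈ V then (‖ξ x‖⁻¹ : ℝ) • ξ x else 1 with hf
  have hfV : ∀ x ∈ V, f x = (‖ξ x‖⁻¹ : ℝ) • ξ x := fun x hx => if_pos hx
  have hfE : ∀ x ∈ E, f x = 1 := by
    intro x hx
    exact if_neg (fun hxV => hx (subset_closure hxV))
  have hfnorm : ∀ x ∈ D, ‖f x‖ = 1 := by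
    rintro x (hx | hx)
    · rw [hfV x hx, norm_smul, Real.norm_eq_abs, abs_of_nonneg (by positivity),
        inv_mul_cancel₀ (norm_ne_zero_iff.2 hx.2)]
    · rw [hfE x hx, norm_one]
  have hfcont : ∀ x ∈ D, ContinuousAt f x := by
    rintro x (hx | hx)
    · have : ContinuousAt (fun y => (‖ξ y‖⁻¹ : ℝ) • ξ y) x := by
        have hcξ : ContinuousAt ξ x :=
          (hξ.contOn x hx.1).continuousAt (hξ.isOpen_compl.mem_nhds hx.1)
        exact ((hcξ.norm.inv₀ (norm_ne_zero_iff.2 hx.2)).smul hcξ)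
      refine this.congr ?_
      filter_upwards [hVopen.mem_nhds hx] with y hy
      exact (hfV y hy).symm
    · have : ContinuousAt (fun _ : Λ => (1 : Quaternion ℝ)) x := continuousAt_const
      refine this.congr ?_
      filter_upwards [hEopen.mem_nhds hx] with y hy
      exact (hfE y hy).symm
  -- the closure of the graph of `f` over `D`
  set S : Set (Λ × Quaternion ℝ) := (fun x => (x, f x)) '' D with hS
  set G : Set (Λ × Quaternion ℝ) := closure S with hG
  have hGsub : G ⊆ Set.univ ×ˢ Metric.sphere (0 : Quaternion ℝ) 1 := by
    refine closure_minimal ?_ (isClosed_univ.prod Metric.isClosed_sphere)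
    rintro p ⟨x, hx, rfl⟩
    exact ⟨Set.mem_univ _, by simpa using hfnorm x hx⟩
  have hGcompact : IsCompact G := by
    refine (isCompact_univ.prod (isCompact_sphere (0 : Quaternion ℝ) 1)).of_isClosed_subset
      isClosed_closure hGsub
  have : CompactSpace G := isCompact_iff_compactSpace.1 hGcompact
  -- the projection `G → Λ` is a continuous surjection
  set π : G → Λ := fun p => p.1.1 with hπ
  have hπcont : Continuous π := (continuous_fst.comp continuous_subtype_val)
  have hπsurj : Function.Surjective π := by
    have hclosed : IsClosed (Set.range π) := by
      have : Set.range π = Prod.fst '' G := by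
        ext z; constructor
        · rintro ⟨p, rfl⟩; exact ⟨p.1, p.2, rfl⟩
        · rintro ⟨p, hp, rfl⟩; exact ⟨⟨p, hp⟩, rfl⟩
      rw [this]
      exact (hGcompact.image continuous_fst).isClosed
    have hDsub : D ⊆ Set.range π := by
      intro x hx
      exact ⟨⟨(x, f x), subset_closure ⟨x, hx, rfl⟩⟩, rfl⟩
    intro x
    have hx2 : x ∈ closure (Set.range π) := by
      rw [(hDdense.mono hDsub).closure_eq]; trivial
    rwa [hclosed.closure_eq] at hx2
  -- lift using projectivity of `Λ`
  obtain ⟨h, hhcont, hhπ⟩ :=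
    CompactT2.ExtremallyDisconnected.projective (A := Λ)
      (f := id (α := Λ)) (g := π) continuous_id hπcont hπsurj
  set q : Λ → Quaternion ℝ := fun x => ((h x : Λ × Quaternion ℝ)).2 with hq
  have hqcont : Continuous q := continuous_snd.comp (continuous_subtype_val.comp hhcont)
  have hqnorm : ∀ x, ‖q x‖ = 1 := by
    intro x
    have := hGsub (h x).2
    simpa using this.2
  -- key: over `D`, points of `G` lie on the graph of `f`
  have hgraph : ∀ p : Λ × Quaternion ℝ, p ∈ G → p.1 ∈ D → p.2 = f p.1 := by
    rintro ⟨x, z⟩ hp hx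
    have hcl : ClusterPt (x, z) (𝓟 S) := mem_closure_iff_clusterPt.1 hp
    set l : Filter (Λ × Quaternion ℝ) := 𝓝 (x, z) ⊓ 𝓟 S with hl
    haveI : l.NeBot := hcl
    have h1 : Tendsto Prod.snd l (𝓝 z) :=
      (continuous_snd.tendsto (x, z)).mono_left inf_le_left
    have h2 : Tendsto Prod.fst l (𝓝 x) :=
      (continuous_fst.tendsto (x, z)).mono_left inf_le_left
    have heq : ∀ᶠ p in l, Prod.snd p = f p.1 := by
      have : ∀ᶠ p in l, p ∈ S := by
        rw [hl]
        exact Eventually.filter_mono inf_le_right (by simp [Filter.eventually_principal])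
      filter_upwards [this] with p hpS
      rcases hpS with ⟨y, _, rfl⟩
      rfl
    have h3 : Tendsto (fun p : Λ × Quaternion ℝ => f p.1) l (𝓝 (f x)) :=
      (hfcont x hx).tendsto.comp h2
    have h4 : Tendsto Prod.snd l (𝓝 (f x)) := h3.congr' (heq.mono fun p hp => hp.symm)
    exact tendsto_nhds_unique h1 h4
  have hqD : ∀ x ∈ D, q x = f x := by
    intro x hx
    have hx1 : (h x : Λ × Quaternion ℝ).1 = x := congrFun hhπ x
    have hkey := hgraph (h x : Λ × Quaternion ℝ) (h x).2 (by rw [hx1]; exact hx)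
    show ((h x : Λ × Quaternion ℝ)).2 = f x
    rw [hkey, hx1]
  refine ⟨q, hqcont, hqnorm, ?_⟩
  intro x hx
  by_cases hx0 : ξ x = 0
  · simp [hx0]
  · have hxV : x ∈ V := ⟨hx, hx0⟩
    rw [hqD x (Or.inl hxV), hfV x hxV, Quaternion.mul_coe_eq_smul, smul_smul,
      mul_inv_cancel₀ (norm_ne_zero_iff.2 hx0), one_smul]
end

section
/- Let Λ be an extremally disconnected compact Hausdorff space and let (Λ_b)_{b∈ℝ} be a family of clopen subsets of Λ with Λ_a ⊆ Λ_b whenever a ≤ b, such that ⋃_{b∈ℝ} Λ_b is dense in Λ and ⋂_{b∈ℝ} Λ_b has empty interior. Put W₊ := Λ∖⋃_b Λ_b, W₋ := ⋂_b Λ_b and W := W₊ ∪ W₋. Then W is closed and nowhere dense in Λ; for each x ∈ Λ∖W the infimum h(x) := inf{b ∈ ℝ : x ∈ Λ_b} exists in ℝ; the function h : Λ∖W → ℝ is continuous; h(y) → +∞ as y → x within Λ∖W for each x ∈ W₊, and h(y) → −∞ as y → x within Λ∖W for each x ∈ W₋. In particular (h, W) is a self-adjoint function on Λ. (topological core of Lemma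 13) -/
open Filter Topology

/-- A self-adjoint (real-valued normal) function on `Λ`: a pair `(h, W)` where `Λ ∖ W` is
open and dense, `h` is continuous on `Λ ∖ W`, and `|h x| → ∞` as `x` approaches any point
of `W` within `Λ ∖ W`. -/
structure IsSelfAdjointFn {Λ : Type*} [TopologicalSpace Λ]
    (h : Λ → ℝ) (W : Set Λ) : Prop where
  isOpen_compl : IsOpen Wᶜ
  dense_compl : Dense Wᶜ
  contOn : ContinuousOn h Wᶜ
  tendsto_abs : ∀ y ∈ W, Tendsto (fun x => |h x|) (𝓝[Wᶜ] y) atTop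

/-- Topological core of Lemma 13: a monotone family of clopen sets `Λ_b` with dense union and
intersection of empty interior determines a self-adjoint function `h x = inf {b | x ∈ Λ_b}`
off the closed nowhere dense set `W = W₊ ∪ W₋`. -/
theorem selfAdjointFn_of_clopen_resolution {Λ : Type*} [TopologicalSpace Λ]
    [CompactSpace Λ] [T2Space Λ] [ExtremallyDisconnected Λ] [Nonempty Λ]
    (L : ℝ → Set Λ) (hclopen : ∀ b, IsClopen (L b))
    (hmono : ∀ a b : ℝ, a ≤ b → L a ⊆ L b)
    (hdense : Dense (⋃ b, L b))
    (hint : interior (⋂ b, L b) = ∅) :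
    let Wp := (⋃ b, L b)ᶜ
    let Wm := ⋂ b, L b
    let W := Wp ∪ Wm
    let h := fun x => sInf {b : ℝ | x ∈ L b}
    IsClosed W ∧ IsNowhereDense W ∧
    (∀ x ∈ Wᶜ, {b : ℝ | x ∈ L b}.Nonempty ∧ BddBelow {b : ℝ | x ∈ L b}) ∧
    ContinuousOn h Wᶜ ∧
    (∀ x ∈ Wp, Tendsto h (𝓝[Wᶜ] x) atTop) ∧
    (∀ x ∈ Wm, Tendsto h (𝓝[Wᶜ] x) atBot) ∧
    IsSelfAdjointFn h W := by
  intro Wp Wm W h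
  have hopen : IsOpen (⋃ b, L b) := isOpen_iUnion fun b => (hclopen b).2
  have hWpclosed : IsClosed Wp := isClosed_compl_iff.mpr hopen
  have hWmclosed : IsClosed Wm := isClosed_iInter fun b => (hclopen b).1
  have hWclosed : IsClosed W := hWpclosed.union hWmclosed
  have hintWp : interior Wp = ∅ := by
    rw [show Wp = (⋃ b, L b)ᶜ from rfl, interior_compl]
    simp [hdense.closure_eq]
  -- interior of W is empty
  have hintW : interior W = ∅ := by
    rw [Set.eq_empty_iff_forall_notMem]
    intro x hx
    have hU : IsOpen (interior W) := isOpen_interior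
    -- interior W \ Wp is open subset of Wm
    have h1 : interior W \ Wp ⊆ interior Wm := by
      apply interior_maximal
      · intro y hy
        rcases interior_subset hy.1 with hy' | hy'
        · exact absurd hy' hy.2
        · exact hy'
      · exact hU.sdiff hWpclosed
    rw [hint] at h1
    have hxWp : x ∈ Wp := by
      by_contra hc
      exact absurd (h1 ⟨hx, hc⟩) (Set.notMem_empty x)
    -- similarly interior W \ Wm ⊆ interior Wp = ∅
    have h2 : interior W \ Wm ⊆ interior Wp := by
      apply interior_maximal
      · intro y hy
        rcases interior_subset hy.1 with hy' | hy'
        · exact hy'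
        · exact absurd hy' hy.2
      · exact hU.sdiff hWmclosed
    rw [hintWp] at h2
    have hxWm : x ∈ Wm := by
      by_contra hc
      exact absurd (h2 ⟨hx, hc⟩) (Set.notMem_empty x)
    -- so interior W ⊆ Wp ∩ Wm... but that's fine; instead: x ∈ Wp ∩ Wm,
    -- x ∈ Wm ⊆ ⋃ b, L b would contradict x ∈ Wp.
    have : x ∈ ⋃ b, L b := Set.mem_iUnion.mpr ⟨0, Set.mem_iInter.mp hxWm 0⟩
    exact hxWp this
  have hWnd : IsNowhereDense W := hWclosed.isNowhereDense_iff.mpr hintW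
  have hne : ∀ x ∉ W, {b : ℝ | x ∈ L b}.Nonempty := by
    intro x hx
    have hxU : x ∈ ⋃ b, L b := by
      by_contra hc
      exact hx (Or.inl hc)
    exact Set.mem_iUnion.mp hxU
  have hbdd : ∀ x ∉ W, BddBelow {b : ℝ | x ∈ L b} := by
    intro x hx
    have hxm : x ∉ Wm := fun hc => hx (Or.inr hc)
    obtain ⟨a, ha⟩ : ∃ a, x ∉ L a := by
      by_contra hc
      push_neg at hc
      exact hxm (Set.mem_iInter.mpr hc)
    exact ⟨a, fun c hc => le_of_not_gt fun hlt => ha (hmono c a hlt.le hc)⟩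
  have hle : ∀ x ∉ W, ∀ b : ℝ, x ∈ L b → h x ≤ b := fun x hx b hb =>
    csInf_le (hbdd x hx) hb
  have hge : ∀ x ∉ W, ∀ b : ℝ, x ∉ L b → b ≤ h x := fun x hx b hb =>
    le_csInf (hne x hx) fun c hc => le_of_not_gt fun hlt => hb (hmono c b hlt.le hc)
  have hmem : ∀ x ∉ W, ∀ b : ℝ, h x < b → x ∈ L b := by
    intro x hx b hlt
    obtain ⟨c, hc, hcb⟩ := exists_lt_of_csInf_lt (hne x hx) hlt
    exact hmono c b hcb.le hc
  have hnotmem : ∀ x ∉ W, ∀ b : ℝ, b < h x → x ∉ L b := by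
    intro x hx b hlt hb
    exact absurd (hle x hx b hb) (not_le.mpr hlt)
  have hcont : ContinuousOn h Wᶜ := by
    intro x hx
    have hx' : x ∉ W := hx
    rw [ContinuousWithinAt, Metric.tendsto_nhds]
    intro ε hε
    set U := L (h x + ε / 2) ∩ (L (h x - ε / 2))ᶜ with hU
    have hUopen : IsOpen U := ((hclopen _).2).inter (hclopen _).1.isOpen_compl
    have hxU : x ∈ U :=
      ⟨hmem x hx' _ (by linarith), hnotmem x hx' _ (by linarith)⟩
    have hUnhds : U ∈ 𝓝[Wᶜ] x := mem_nhdsWithin_of_mem_nhds (hUopen.mem_nhds hxU)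
    filter_upwards [hUnhds, self_mem_nhdsWithin] with y hyU hyW
    have h1 : h y ≤ h x + ε / 2 := hle y hyW _ hyU.1
    have h2 : h x - ε / 2 ≤ h y := hge y hyW _ hyU.2
    rw [Real.dist_eq, abs_sub_lt_iff]
    constructor <;> linarith
  have hatTop : ∀ x ∈ Wp, Tendsto h (𝓝[Wᶜ] x) atTop := by
    intro x hx
    rw [tendsto_atTop]
    intro b
    have hxb : x ∉ L b := fun hc => hx (Set.mem_iUnion.mpr ⟨b, hc⟩)
    have hUnhds : (L b)ᶜ ∈ 𝓝[Wᶜ] x :=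
      mem_nhdsWithin_of_mem_nhds ((hclopen b).1.isOpen_compl.mem_nhds hxb)
    filter_upwards [hUnhds, self_mem_nhdsWithin] with y hy hyW
    exact hge y hyW b hy
  have hatBot : ∀ x ∈ Wm, Tendsto h (𝓝[Wᶜ] x) atBot := by
    intro x hx
    rw [tendsto_atBot]
    intro b
    have hxb : x ∈ L b := Set.mem_iInter.mp hx b
    have hUnhds : L b ∈ 𝓝[Wᶜ] x :=
      mem_nhdsWithin_of_mem_nhds ((hclopen b).2.mem_nhds hxb)
    filter_upwards [hUnhds, self_mem_nhdsWithin] with y hy hyW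
    exact hle y hyW b hy
  refine ⟨hWclosed, hWnd, fun x hx => ⟨hne x hx, hbdd x hx⟩, hcont, hatTop, hatBot, ?_⟩
  refine ⟨hWclosed.isOpen_compl, ?_, hcont, ?_⟩
  · rw [← interior_eq_empty_iff_dense_compl]
    exact hintW
  · intro y hy
    rcases hy with hy | hy
    · exact (tendsto_abs_atTop_atTop).comp (hatTop y hy)
    · exact (tendsto_abs_atBot_atTop).comp (hatBot y hy)
end

section
/- Let Λ be an extremally disconnected compact Hausdorff space and let (h, W) be a self-adjoint function on Λ. Let W₊ := {y ∈ W : h(x) → +∞ as x → y within Λ∖W} and W₋ := {y ∈ W : h(x) → −∞ as x → y within Λ∖W}, and assume W = W₊ ∪ W₋. For b ∈ ℝ set U_b := {x ∈ Λ∖W : h(x) > b}, V_b := U_b ∪ W₊ and Λ_b := Λ∖cl(V_b). Then V_b is open in Λ, Λ_b is clopen in Λ, h(x) ≤ b for every x ∈ Λ_b∖W, Λ_b ∩ W = W₋, and Λ_b is the largest such clopen set: every clopen K ⊆ Λ satisfying h(x) ≤ b for all x ∈ K∖W and K ∩ W₊ = ∅ is contained in Λ_b. (claim established in the proofs of Lemma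 10 and Theorem 16(e)) -/
open Filter Topology

/-- Claim from the proofs of Lemma 10 and Theorem 16(e): for a self-adjoint function `(h, W)`
with `W = W₊ ∪ W₋`, the set `Λ_b := Λ ∖ cl(U_b ∪ W₊)` is the largest clopen set on which
`h ≤ b` (in the extended sense), and it meets `W` exactly in `W₋`. -/
theorem selfAdjointFn_largest_clopen_level_set {Λ : Type*} [TopologicalSpace Λ]
    [CompactSpace Λ] [T2Space Λ] [ExtremallyDisconnected Λ] [Nonempty Λ]
    (h : Λ → ℝ) (W : Set Λ) (hsa : IsSelfAdjointFn h W)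
    (Wp Wm : Set Λ)
    (hWp : Wp = {y | y ∈ W ∧ Tendsto h (𝓝[Wᶜ] y) atTop})
    (hWm : Wm = {y | y ∈ W ∧ Tendsto h (𝓝[Wᶜ] y) atBot})
    (hW : W = Wp ∪ Wm) (b : ℝ) :
    let U := {x | x ∈ Wᶜ ∧ b < h x}
    let V := U ∪ Wp
    let Lb := (closure V)ᶜ
    IsOpen V ∧ IsClopen Lb ∧ (∀ x ∈ Lb \ W, h x ≤ b) ∧ Lb ∩ W = Wm ∧
    (∀ K : Set Λ, IsClopen K → (∀ x ∈ K \ W, h x ≤ b) → K ∩ Wp = ∅ → K ⊆ Lb) := by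
  intro U V Lb
  have hne : ∀ x : Λ, (𝓝[Wᶜ] x).NeBot := fun x =>
    mem_closure_iff_nhdsWithin_neBot.mp (hsa.dense_compl x)
  -- U is open
  have hUopen : IsOpen U := by
    have h0 := hsa.contOn.isOpen_inter_preimage hsa.isOpen_compl (isOpen_Ioi (a := b))
    have he : U = Wᶜ ∩ h ⁻¹' Set.Ioi b := by ext x; simp [U]
    rw [he]; exact h0
  -- V is open
  have hVopen : IsOpen V := by
    rw [isOpen_iff_mem_nhds]
    rintro y (hy | hy)
    · exact Filter.mem_of_superset (hUopen.mem_nhds hy) Set.subset_union_left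
    · rw [hWp] at hy
      have h1 : ∀ᶠ x in 𝓝 y, x ∈ Wᶜ → b < h x := by
        have := hy.2.eventually (eventually_gt_atTop b)
        rwa [eventually_nhdsWithin_iff] at this
      have h2 : ∀ᶠ x in 𝓝 y, ∀ᶠ z in 𝓝 x, z ∈ Wᶜ → b < h z := h1.eventually_nhds
      filter_upwards [h2] with x hx
      by_cases hxW : x ∈ W
      · right
        have hxW' := hxW
        rw [hW] at hxW'
        rcases hxW' with hxp | hxm
        · exact hxp
        · exfalso
          rw [hWm] at hxm
          have hb1 : ∀ᶠ z in 𝓝[Wᶜ] x, b < h z := by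
            rw [eventually_nhdsWithin_iff]; exact hx
          have hb2 : ∀ᶠ z in 𝓝[Wᶜ] x, h z < b := hxm.2.eventually (eventually_lt_atBot b)
          haveI := hne x
          obtain ⟨z, hz1, hz2⟩ := (hb1.and hb2).exists
          linarith
      · exact Or.inl ⟨hxW, hx.self_of_nhds hxW⟩
  have hLbclopen : IsClopen Lb := by
    have hcl : IsClopen (closure V) :=
      ⟨isClosed_closure, ExtremallyDisconnected.open_closure V hVopen⟩
    exact hcl.compl
  refine ⟨hVopen, hLbclopen, ?_, ?_, ?_⟩
  · rintro x ⟨hx, hxW⟩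
    by_contra hb
    exact hx (subset_closure (Or.inl ⟨hxW, lt_of_not_ge hb⟩))
  · apply Set.Subset.antisymm
    · rintro y ⟨hy, hyW⟩
      have hyW' := hyW
      rw [hW] at hyW'
      rcases hyW' with hyp | hym
      · exact absurd (subset_closure (Set.mem_union_right U hyp)) hy
      · exact hym
    · intro y hy
      have hyW : y ∈ W := (hWm ▸ hy).1
      refine ⟨?_, hyW⟩
      have hbot : Tendsto h (𝓝[Wᶜ] y) atBot := (hWm ▸ hy).2
      have h1 : ∀ᶠ x in 𝓝 y, x ∈ Wᶜ → h x < b := by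
        have := hbot.eventually (eventually_lt_atBot b)
        rwa [eventually_nhdsWithin_iff] at this
      have h2 : ∀ᶠ x in 𝓝 y, ∀ᶠ z in 𝓝 x, z ∈ Wᶜ → h z < b := h1.eventually_nhds
      have h3 : ∀ᶠ x in 𝓝 y, x ∉ V := by
        filter_upwards [h2] with x hx
        rintro (⟨hxc, hxb⟩ | hxp)
        · exact absurd (hx.self_of_nhds hxc) (not_lt.mpr hxb.le)
        · rw [hWp] at hxp
          have hb1 : ∀ᶠ z in 𝓝[Wᶜ] x, h z < b := by
            rw [eventually_nhdsWithin_iff]; exact hx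
          have hb2 : ∀ᶠ z in 𝓝[Wᶜ] x, b < h z := hxp.2.eventually (eventually_gt_atTop b)
          haveI := hne x
          obtain ⟨z, hz1, hz2⟩ := (hb1.and hb2).exists
          exact absurd hz2 (not_lt.mpr hz1.le)
      have : Vᶜ ∈ 𝓝 y := h3
      show y ∈ (closure V)ᶜ
      rw [← interior_compl]
      exact mem_interior_iff_mem_nhds.mpr this
  · intro K hK hKb hKWp
    have hKV : K ∩ V = ∅ := by
      ext x
      simp only [Set.mem_inter_iff, Set.mem_empty_iff_false, iff_false, not_and]
      rintro hxK (⟨hxc, hxb⟩ | hxp)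
      · exact absurd (hKb x ⟨hxK, hxc⟩) (not_le.mpr hxb)
      · exact (Set.eq_empty_iff_forall_notMem.mp hKWp x) ⟨hxK, hxp⟩
    intro x hx
    simp only [Lb, Set.mem_compl_iff]
    intro hxcl
    have := hK.isOpen.inter_closure ⟨hx, hxcl⟩
    rw [hKV, closure_empty] at this
    exact this
end

section
/- Let Λ be an extremally disconnected compact Hausdorff space and let (f, W_f) be a normal function on Λ. Then the following are equivalent: (i) there exists a normal function (g, W_g) on Λ such that f(x)·g(x) = 1 and g(x)·f(x) = 1 for every x ∈ Λ∖(W_f ∪ W_g); (ii) there is no nonempty clopen subset C of Λ with C ∩ W_f = ∅ and f(x) = 0 for all x ∈ C. (function-level content of Note 34: invertibility of a normal function fails exactly when it vanishes on a nonvoid clopen set) -/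
open Filter Topology

/-- If `f` is continuous on `O`, vanishes on `s ⊆ O`, and `y ∈ closure s ∩ O`,
then `f y = 0`. -/
private lemma aux_zero_on_closure {Λ : Type*} [TopologicalSpace Λ]
    {f : Λ → Quaternion ℝ} {O s : Set Λ} (hc : ContinuousOn f O) (hs : s ⊆ O)
    (h0 : ∀ x ∈ s, f x = 0) {y : Λ} (hy : y ∈ closure s) (hyO : y ∈ O) : f y = 0 := by
  have hne : (𝓝[s] y).NeBot := mem_closure_iff_nhdsWithin_neBot.mp hy
  have h1 : Tendsto f (𝓝[s] y) (𝓝 (f y)) :=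
    (hc y hyO).mono_left (nhdsWithin_mono _ hs)
  have h2 : Tendsto f (𝓝[s] y) (𝓝 0) := by
    refine Tendsto.congr' ?_ tendsto_const_nhds
    filter_upwards [self_mem_nhdsWithin] with x hx
    exact (h0 x hx).symm
  exact tendsto_nhds_unique h1 h2

/-- Note 34 (function level): a normal function has an inverse in the algebra of normal
functions if and only if it does not vanish on any nonempty clopen subset of its domain. -/
theorem normalFn_invertible_iff_not_vanishing_on_clopen {Λ : Type*} [TopologicalSpace Λ]
    [CompactSpace Λ] [T2Space Λ] [ExtremallyDisconnected Λ] [Nonempty Λ]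
    (f : Λ → Quaternion ℝ) (Wf : Set Λ) (hf : IsNormalFn f Wf) :
    (∃ (g : Λ → Quaternion ℝ) (Wg : Set Λ), IsNormalFn g Wg ∧
        ∀ x ∈ (Wf ∪ Wg)ᶜ, f x * g x = 1 ∧ g x * f x = 1) ↔
      ¬ ∃ C : Set Λ, C.Nonempty ∧ IsClopen C ∧ C ∩ Wf = ∅ ∧ ∀ x ∈ C, f x = 0 := by
  classical
  constructor
  · rintro ⟨g, Wg, hg, hfg⟩ ⟨C, hCne, hCcl, hCWf, hC0⟩
    obtain ⟨x, hxC, hxg⟩ := hg.dense_compl.inter_open_nonempty C hCcl.2 hCne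
    have hxWf : x ∈ Wfᶜ := fun hx => by
      have : x ∈ C ∩ Wf := ⟨hxC, hx⟩
      simp [hCWf] at this
    have hx : x ∈ (Wf ∪ Wg)ᶜ := by
      simp only [Set.compl_union, Set.mem_inter_iff]
      exact ⟨hxWf, hxg⟩
    have h1 := (hfg x hx).1
    rw [hC0 x hxC, zero_mul] at h1
    exact zero_ne_one h1
  · intro hno
    -- Zero set of f inside the domain, and its closure.
    set Z : Set Λ := Wfᶜ ∩ f ⁻¹' {0} with hZ
    set K : Set Λ := closure Z with hK
    have hZWfc : Z ⊆ Wfᶜ := Set.inter_subset_left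
    have hZ0 : ∀ x ∈ Z, f x = 0 := fun x hx => hx.2
    -- K is disjoint from Wf.
    have hKWf : ∀ y ∈ Wf, y ∉ K := by
      intro y hy hyK
      have hne : (𝓝[Z] y).NeBot := mem_closure_iff_nhdsWithin_neBot.mp hyK
      have ht : Tendsto (fun x => ‖f x‖) (𝓝[Z] y) atTop :=
        (hf.tendsto_norm y hy).mono_left (nhdsWithin_mono _ hZWfc)
      have h1 : ∀ᶠ x in 𝓝[Z] y, (1 : ℝ) ≤ ‖f x‖ := ht.eventually_ge_atTop 1
      have h2 : ∀ᶠ x in 𝓝[Z] y, x ∈ Z := self_mem_nhdsWithin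
      obtain ⟨x, hx1, hx2⟩ := (h1.and h2).exists
      rw [hZ0 x hx2] at hx1
      norm_num at hx1
    have hKWfc : K ⊆ Wfᶜ := by
      intro y hy
      by_contra h
      exact hKWf y (not_not.mp h) hy
    -- f vanishes on K.
    have hK0 : ∀ y ∈ K, f y = 0 := fun y hy =>
      aux_zero_on_closure hf.contOn hZWfc hZ0 hy (hKWfc hy)
    -- K has empty interior (else we'd get a forbidden clopen set).
    have hKint : interior K = ∅ := by
      by_contra h
      obtain ⟨V, hVsub, hVopen, hVne⟩ :
          ∃ V : Set Λ, V ⊆ K ∧ IsOpen V ∧ V.Nonempty := by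
        refine ⟨interior K ∩ Wfᶜ, fun x hx => interior_subset hx.1, ?_, ?_⟩
        · exact isOpen_interior.inter hf.isOpen_compl
        · rcases Set.nonempty_iff_ne_empty.mpr h with ⟨x, hx⟩
          obtain ⟨y, hy1, hy2⟩ := hf.dense_compl.inter_open_nonempty _ isOpen_interior ⟨x, hx⟩
          exact ⟨y, hy1, hy2⟩
      refine hno ⟨closure V, hVne.closure, ⟨isClosed_closure,
        ExtremallyDisconnected.open_closure V hVopen⟩, ?_, ?_⟩
      · have hcl : closure V ⊆ K := closure_minimal hVsub isClosed_closure
        apply Set.eq_empty_iff_forall_notMem.mpr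
        rintro x ⟨hx1, hx2⟩
        exact hKWf x hx2 (hcl hx1)
      · intro x hx
        have hxK : x ∈ K := closure_minimal hVsub isClosed_closure hx
        exact aux_zero_on_closure hf.contOn (fun z hz => hKWfc (hVsub hz))
          (fun z hz => hK0 z (hVsub hz)) hx (hKWfc hxK)
    -- Define the inverse function.
    set g : Λ → Quaternion ℝ := fun x => if x ∈ Wf then 0 else (f x)⁻¹ with hg
    have hfne : ∀ x ∈ Wfᶜ ∩ Kᶜ, f x ≠ 0 := by
      intro x hx h0
      exact hx.2 (subset_closure ⟨hx.1, h0⟩)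
    have hgval : ∀ x ∈ Wfᶜ, g x = (f x)⁻¹ := by
      intro x hx; simp only [hg, if_neg hx]
    refine ⟨g, K, ⟨isClosed_closure.isOpen_compl, ?_, ?_, ?_⟩, ?_⟩
    · -- density of Kᶜ
      rwa [← interior_eq_empty_iff_dense_compl]
    · -- continuity of g on Kᶜ
      intro y hy
      by_cases hyWf : y ∈ Wf
      · -- g tends to 0 = g y within Kᶜ at y
        have hgy : g y = 0 := by simp [hg, hyWf]
        rw [ContinuousWithinAt, hgy]
        have hsplit : 𝓝[Kᶜ] y ≤ 𝓝[Wf] y ⊔ 𝓝[Wfᶜ ∩ Kᶜ] y := by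
          rw [← nhdsWithin_union]
          apply nhdsWithin_mono
          intro x hx
          by_cases h : x ∈ Wf
          · exact Or.inl h
          · exact Or.inr ⟨h, hx⟩
        refine Tendsto.mono_left ?_ hsplit
        rw [tendsto_sup]
        constructor
        · refine Tendsto.congr' ?_ tendsto_const_nhds
          filter_upwards [self_mem_nhdsWithin] with x hx
          simp [hg, hx]
        · -- along Wfᶜ ∩ Kᶜ: ‖g‖ = ‖f‖⁻¹ → 0 since ‖f‖ → ∞
          have hnorm : Tendsto (fun x => ‖f x‖) (𝓝[Wfᶜ ∩ Kᶜ] y) atTop :=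
            (hf.tendsto_norm y hyWf).mono_left (nhdsWithin_mono _ Set.inter_subset_left)
          rw [tendsto_zero_iff_norm_tendsto_zero]
          have : Tendsto (fun x => ‖f x‖⁻¹) (𝓝[Wfᶜ ∩ Kᶜ] y) (𝓝 0) :=
            hnorm.inv_tendsto_atTop
          refine Tendsto.congr' ?_ this
          filter_upwards [self_mem_nhdsWithin] with x hx
          rw [hgval x hx.1, norm_inv]
      · -- y ∈ Wfᶜ ∩ Kᶜ : g = f⁻¹ near y, continuous since f y ≠ 0
        have hyWfc : y ∈ Wfᶜ := hyWf
        have hyO : y ∈ Wfᶜ ∩ Kᶜ := ⟨hyWfc, hy⟩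
        have hOopen : IsOpen (Wfᶜ ∩ Kᶜ) := hf.isOpen_compl.inter isClosed_closure.isOpen_compl
        have hfy : f y ≠ 0 := hfne y hyO
        have hfc : ContinuousAt f y :=
          hf.contOn.continuousAt (hf.isOpen_compl.mem_nhds hyWfc)
        have hinv : ContinuousAt (fun x => (f x)⁻¹) y := hfc.inv₀ hfy
        have : ContinuousAt g y := by
          refine hinv.congr ?_
          filter_upwards [hOopen.mem_nhds hyO] with x hx
          exact (hgval x hx.1).symm
        exact this.continuousWithinAt
    · -- blow-up of ‖g‖ at points of K
      intro y hyK
      have hyWfc : y ∈ Wfᶜ := hKWfc hyK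
      have hfy0 : f y = 0 := hK0 y hyK
      -- within Kᶜ, eventually we are in Wfᶜ (open nbhd of y)
      have hEv : ∀ᶠ x in 𝓝[Kᶜ] y, x ∈ Wfᶜ :=
        eventually_nhdsWithin_of_eventually_nhds
          (hf.isOpen_compl.eventually_mem hyWfc)
      have hEvK : ∀ᶠ x in 𝓝[Kᶜ] y, x ∈ Kᶜ := self_mem_nhdsWithin
      have hnorm0 : Tendsto (fun x => ‖f x‖) (𝓝[Kᶜ] y) (𝓝 0) := by
        have hcont : Tendsto f (𝓝[Kᶜ] y) (𝓝 (f y)) := by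
          have := (hf.contOn y hyWfc)
          refine Tendsto.mono_left this.tendsto ?_
          -- 𝓝[Kᶜ] y ≤ 𝓝[Wfᶜ] y since eventually in Wfᶜ
          rw [nhdsWithin, nhdsWithin, le_inf_iff]
          exact ⟨inf_le_left, le_principal_iff.mpr hEv⟩
        rw [hfy0] at hcont
        simpa using hcont.norm
      have hpos : ∀ᶠ x in 𝓝[Kᶜ] y, 0 < ‖f x‖ := by
        filter_upwards [hEv, hEvK] with x hx1 hx2
        exact norm_pos_iff.mpr (hfne x ⟨hx1, hx2⟩)
      have hnw : Tendsto (fun x => ‖f x‖) (𝓝[Kᶜ] y) (𝓝[>] 0) := by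
        rw [tendsto_nhdsWithin_iff]
        exact ⟨hnorm0, hpos⟩
      have := hnw.inv_tendsto_nhdsGT_zero
      refine Tendsto.congr' ?_ this
      filter_upwards [hEv] with x hx
      simp only [Pi.inv_apply]
      rw [hgval x hx, norm_inv]
    · -- product identities
      rintro x hx
      rw [Set.compl_union] at hx
      have hxWf : x ∈ Wfᶜ := hx.1
      have hfx : f x ≠ 0 := hfne x ⟨hx.1, hx.2⟩
      rw [hgval x hxWf]
      exact ⟨mul_inv_cancel₀ hfx, inv_mul_cancel₀ hfx⟩
end

section
/- Let Λ be an extremally disconnected compact Hausdorff space and let (f, W_f) and (g, W_g) be normal functions on Λ with W_f ∩ W_g = ∅. Then there exists a clopen subset C of Λ with W_f ⊆ C and C ∩ W_g = ∅ such that f is bounded on (Λ∖W_f)∖C and g is bounded on C∖W_g. (claim established in Note 53) -/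
open Filter Topology

/-- Claim from Note 53: if two normal functions have disjoint singular sets, there is a clopen
set `C` containing `W_f` and disjoint from `W_g` such that `f` is bounded off `C` and `g` is
bounded on `C`. -/
theorem normalFn_disjoint_singular_sets_clopen_separation {Λ : Type*} [TopologicalSpace Λ]
    [CompactSpace Λ] [T2Space Λ] [ExtremallyDisconnected Λ] [Nonempty Λ]
    (f g : Λ → Quaternion ℝ) (Wf Wg : Set Λ)
    (hf : IsNormalFn f Wf) (hg : IsNormalFn g Wg) (hdisj : Wf ∩ Wg = ∅) :
    ∃ C : Set Λ, IsClopen C ∧ Wf ⊆ C ∧ C ∩ Wg = ∅ ∧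
      (∃ M : ℝ, ∀ x ∈ Wfᶜ \ C, ‖f x‖ ≤ M) ∧
      (∃ M : ℝ, ∀ x ∈ C \ Wg, ‖g x‖ ≤ M) := by
  have hWf_closed : IsClosed Wf := by simpa using hf.isOpen_compl.isClosed_compl
  have hWg_closed : IsClosed Wg := by simpa using hg.isOpen_compl.isClosed_compl
  have hd : Disjoint Wf Wg := Set.disjoint_iff_inter_eq_empty.2 hdisj
  obtain ⟨U, V, hU, hV, hWfU, hWgV, hUV⟩ :=
    NormalSpace.normal Wf Wg hWf_closed hWg_closed hd
  set C := closure U with hC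
  have hCopen : IsOpen C := ExtremallyDisconnected.open_closure U hU
  have hCclopen : IsClopen C := ⟨isClosed_closure, hCopen⟩
  have hWfC : Wf ⊆ C := hWfU.trans subset_closure
  have hCV : Disjoint C Wg := by
    have : C ⊆ Vᶜ := closure_minimal (fun x hx hxV => hUV.le_bot ⟨hx, hxV⟩) hV.isClosed_compl
    exact Set.disjoint_left.2 fun x hxC hxW => this hxC (hWgV hxW)
  refine ⟨C, hCclopen, hWfC, Set.disjoint_iff_inter_eq_empty.1 hCV, ?_, ?_⟩
  · have hcomp : IsCompact Cᶜ := hCopen.isClosed_compl.isCompact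
    have hsub : Cᶜ ⊆ Wfᶜ := Set.compl_subset_compl.2 hWfC
    obtain ⟨M, hM⟩ := hcomp.exists_bound_of_continuousOn (hf.contOn.mono hsub)
    exact ⟨M, fun x hx => hM x hx.2⟩
  · have hcomp : IsCompact C := hCclopen.isClosed.isCompact
    have hsub : C ⊆ Wgᶜ := Set.subset_compl_iff_disjoint_right.2 hCV
    obtain ⟨M, hM⟩ := hcomp.exists_bound_of_continuousOn (hg.contOn.mono hsub)
    exact ⟨M, fun x hx => hM x hx.1⟩
end

section
/- Let X be a real Hilbert space, let T be a closed densely defined linear operator in X, and let E be a bounding projection for T. Then E(X) ⊆ D(T*), the everywhere-defined operator T*E : x ↦ T*(Ex) is bounded, and E(T*y) = T*(Ey) for every y ∈ D(T*) (so E is a bounding projection for T*); moreover the adjoint of the bounded operator TE equals T*E, and E is also a bounding projection for the operators T*T and TT*. Furthermore, if (E_n) is a bounding sequence for T, then ⋃_n E_n(X) is a core for T, for T*, for T*T and for TT*. (Lemma 21, in the real Hilbert space setting) -/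
open scoped InnerProductSpace RealInnerProductSpace

namespace Stmt13

variable {X : Type*} [NormedAddCommGroup X] [InnerProductSpace ℝ X] [CompleteSpace X]

/-- Composition `S ∘ T` of two partially defined operators, with domain
`{x ∈ D(T) : T x ∈ D(S)}`. -/
noncomputable def pComp (S T : X →ₗ.[ℝ] X) : X →ₗ.[ℝ] X where
  domain :=
  { carrier := {x | ∃ hx : x ∈ T.domain, T ⟨x, hx⟩ ∈ S.domain}
    add_mem' := by
      rintro x y ⟨hx, hx'⟩ ⟨hy, hy'⟩
      refine ⟨T.domain.add_mem hx hy, ?_⟩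
      have e : (⟨x + y, T.domain.add_mem hx hy⟩ : T.domain) = ⟨x, hx⟩ + ⟨y, hy⟩ := rfl
      rw [e, T.map_add]
      exact S.domain.add_mem hx' hy'
    zero_mem' := by
      refine ⟨T.domain.zero_mem, ?_⟩
      have e : (⟨(0 : X), T.domain.zero_mem⟩ : T.domain) = 0 := rfl
      rw [e, T.map_zero]
      exact S.domain.zero_mem
    smul_mem' := by
      rintro c x ⟨hx, hx'⟩
      refine ⟨T.domain.smul_mem c hx, ?_⟩
      have e : (⟨c • x, T.domain.smul_mem c hx⟩ : T.domain) = c • ⟨x, hx⟩ := rfl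
      rw [e, T.map_smul]
      exact S.domain.smul_mem c hx' }
  toFun :=
  { toFun := fun x => S ⟨T ⟨x.1, x.2.choose⟩, x.2.choose_spec⟩
    map_add' := by
      rintro x y
      have eT : T ⟨(x + y : _), (x + y).2.choose⟩ = T ⟨x.1, x.2.choose⟩ + T ⟨y.1, y.2.choose⟩ := by
        rw [show (⟨(x + y : _), (x + y).2.choose⟩ : T.domain)
            = ⟨x.1, x.2.choose⟩ + ⟨y.1, y.2.choose⟩ from Subtype.ext rfl, T.map_add]
      have eS : (⟨T ⟨(x + y : _), (x + y).2.choose⟩, (x + y).2.choose_spec⟩ : S.domain)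
          = ⟨T ⟨x.1, x.2.choose⟩, x.2.choose_spec⟩ + ⟨T ⟨y.1, y.2.choose⟩, y.2.choose_spec⟩ :=
        Subtype.ext eT
      show S _ = S _ + S _
      rw [eS, S.map_add]
    map_smul' := by
      rintro c x
      have eT : T ⟨(c • x : _), (c • x).2.choose⟩ = c • T ⟨x.1, x.2.choose⟩ := by
        rw [show (⟨(c • x : _), (c • x).2.choose⟩ : T.domain)
            = c • ⟨x.1, x.2.choose⟩ from Subtype.ext rfl, T.map_smul]
      have eS : (⟨T ⟨(c • x : _), (c • x).2.choose⟩, (c • x).2.choose_spec⟩ : S.domain)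
          = c • ⟨T ⟨x.1, x.2.choose⟩, x.2.choose_spec⟩ :=
        Subtype.ext eT
      show S _ = c • S _
      rw [eS, S.map_smul] }

/-- `E` is a bounding projection for the partially defined operator `T`: `E` is an orthogonal
projection whose range is contained in `D(T)`, the everywhere-defined operator `x ↦ T (E x)`
is bounded, and `T (E x) = E (T x)` for every `x ∈ D(T)`. -/
structure IsBoundingProjection (T : X →ₗ.[ℝ] X) (E : X →L[ℝ] X) : Prop where
  idem : IsIdempotentElem E
  selfAdjoint : IsSelfAdjoint E
  mem_domain : ∀ x, E x ∈ T.domain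
  bounded : ∃ C : ℝ, ∀ x, ‖T ⟨E x, mem_domain x⟩‖ ≤ C * ‖x‖
  commutes : ∀ y : T.domain, E (T y) = T ⟨E y, mem_domain y⟩

/-- A bounding sequence for `T`: an increasing (in range) sequence of bounding projections
whose ranges have dense union. -/
structure IsBoundingSequence (T : X →ₗ.[ℝ] X) (E : ℕ → X →L[ℝ] X) : Prop where
  bounding : ∀ n, IsBoundingProjection T (E n)
  mono : ∀ n, LinearMap.range (E n).toLinearMap ≤ LinearMap.range (E (n + 1)).toLinearMap
  dense_union : Dense (⋃ n, Set.range (E n))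

section Aux

open Filter Topology

lemma mem_pComp_domain {S T : X →ₗ.[ℝ] X} {x : X} :
    x ∈ (pComp S T).domain ↔ ∃ hx : x ∈ T.domain, T ⟨x, hx⟩ ∈ S.domain := Iff.rfl

lemma pComp_apply (S T : X →ₗ.[ℝ] X) {x : X} (hx : x ∈ T.domain)
    (hx' : T ⟨x, hx⟩ ∈ S.domain) (h : x ∈ (pComp S T).domain) :
    pComp S T ⟨x, h⟩ = S ⟨T ⟨x, hx⟩, hx'⟩ := rfl

/-- Inner product identity for a self-adjoint continuous linear map. -/
lemma selfadj_inner {E : X →L[ℝ] X} (h : IsSelfAdjoint E) (x y : X) :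
    ⟪E x, y⟫ = ⟪x, E y⟫ := by
  have h' : ContinuousLinearMap.adjoint E = E :=
    (ContinuousLinearMap.isSelfAdjoint_iff' ).mp h
  conv_lhs => rw [← h']
  rw [ContinuousLinearMap.adjoint_inner_left, real_inner_comm]

/-- An orthogonal projection is a contraction. -/
lemma proj_norm_le {E : X →L[ℝ] X} (hI : IsIdempotentElem E) (hS : IsSelfAdjoint E)
    (x : X) : ‖E x‖ ≤ ‖x‖ := by
  rcases eq_or_ne (E x) 0 with h | h
  · simp [h, norm_nonneg]
  have h1 : ‖E x‖ * ‖E x‖ = ⟪E x, E x⟫ := (real_inner_self_eq_norm_mul_norm _).symm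
  have h2 : ⟪E x, E x⟫ = ⟪x, E x⟫ := by
    rw [selfadj_inner hS]
    congr 1
    have := congrArg (fun f => f x) hI
    simpa [ContinuousLinearMap.mul_apply] using this
  have h3 : ⟪x, E x⟫ ≤ ‖x‖ * ‖E x‖ := real_inner_le_norm x (E x)
  have hEx : 0 < ‖E x‖ := norm_pos_iff.mpr h
  nlinarith [h1, h2, h3]

variable {T : X →ₗ.[ℝ] X} {E : X →L[ℝ] X}

/-- The bounded operator `T E` associated to a bounding projection. -/
noncomputable def boundedTE (hE : IsBoundingProjection T E) : X →L[ℝ] X :=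
  LinearMap.mkContinuousOfExistsBound
    { toFun := fun x => T ⟨E x, hE.mem_domain x⟩
      map_add' := by
        intro x y
        rw [show (⟨E (x + y), hE.mem_domain (x + y)⟩ : T.domain)
            = ⟨E x, hE.mem_domain x⟩ + ⟨E y, hE.mem_domain y⟩ from Subtype.ext (map_add E x y),
          T.map_add]
      map_smul' := by
        intro c x
        rw [show (⟨E (c • x), hE.mem_domain (c • x)⟩ : T.domain)
            = c • ⟨E x, hE.mem_domain x⟩ from Subtype.ext (map_smul E c x), T.map_smul]
        rfl }
    hE.bounded

lemma boundedTE_apply (hE : IsBoundingProjection T E) (x : X) :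
    boundedTE hE x = T ⟨E x, hE.mem_domain x⟩ := rfl

lemma T_apply_E (hE : IsBoundingProjection T E) {x : X} (h : E x ∈ T.domain) :
    T ⟨E x, h⟩ = boundedTE hE x := rfl

lemma key_inner (hE : IsBoundingProjection T E) (y : X) (x : T.domain) :
    ⟪ContinuousLinearMap.adjoint (boundedTE hE) y, (x : X)⟫ = ⟪E y, T x⟫ := by
  rw [ContinuousLinearMap.adjoint_inner_left, boundedTE_apply, ← hE.commutes x,
    ← selfadj_inner hE.selfAdjoint]

lemma adjoint_mem_of_bounding (hTdense : Dense (T.domain : Set X))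
    (hE : IsBoundingProjection T E) (y : X) : E y ∈ T.adjoint.domain :=
  LinearPMap.mem_adjoint_domain_of_exists _
    ⟨ContinuousLinearMap.adjoint (boundedTE hE) y, fun x => key_inner hE y x⟩

lemma adjoint_apply_E (hTdense : Dense (T.domain : Set X)) (hE : IsBoundingProjection T E)
    (y : X) (h : E y ∈ T.adjoint.domain) :
    T.adjoint ⟨E y, h⟩ = ContinuousLinearMap.adjoint (boundedTE hE) y :=
  LinearPMap.adjoint_apply_eq hTdense _ fun x => key_inner hE y x

lemma adjoint_commutes (hTdense : Dense (T.domain : Set X)) (hE : IsBoundingProjection T E)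
    (y : T.adjoint.domain) (h : E (y : X) ∈ T.adjoint.domain) :
    E (T.adjoint y) = T.adjoint ⟨E (y : X), h⟩ := by
  rw [adjoint_apply_E hTdense hE _ h]
  refine ext_inner_right ℝ fun v => ?_
  rw [selfadj_inner hE.selfAdjoint, ContinuousLinearMap.adjoint_inner_left, boundedTE_apply]
  exact LinearPMap.adjoint_isFormalAdjoint hTdense y ⟨E v, hE.mem_domain v⟩

lemma isBoundingProjection_adjoint (hTdense : Dense (T.domain : Set X))
    (hE : IsBoundingProjection T E) : IsBoundingProjection T.adjoint E where
  idem := hE.idem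
  selfAdjoint := hE.selfAdjoint
  mem_domain := adjoint_mem_of_bounding hTdense hE
  bounded := by
    refine ⟨‖ContinuousLinearMap.adjoint (boundedTE hE)‖, fun y => ?_⟩
    rw [adjoint_apply_E hTdense hE y (adjoint_mem_of_bounding hTdense hE y)]
    exact (ContinuousLinearMap.adjoint (boundedTE hE)).le_opNorm y
  commutes := fun y =>
    adjoint_commutes hTdense hE y (adjoint_mem_of_bounding hTdense hE _)

lemma idem_apply {E : X →L[ℝ] X} (hI : IsIdempotentElem E) (x : X) : E (E x) = E x := by
  have := congrArg (fun f => f x) hI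
  simpa [ContinuousLinearMap.mul_apply] using this

lemma E_fix_TE (hE : IsBoundingProjection T E) (x : X) :
    E (boundedTE hE x) = boundedTE hE x := by
  have h := hE.commutes ⟨E x, hE.mem_domain x⟩
  rw [boundedTE_apply, h]
  exact congrArg _ (Subtype.ext (idem_apply hE.idem x))

lemma TE_mem_adjoint_domain (hTdense : Dense (T.domain : Set X))
    (hE : IsBoundingProjection T E) (x : X) : boundedTE hE x ∈ T.adjoint.domain := by
  rw [← E_fix_TE hE x]; exact adjoint_mem_of_bounding hTdense hE _

lemma E_fix_adjTE (hTdense : Dense (T.domain : Set X)) (hE : IsBoundingProjection T E)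
    (y : X) : E (ContinuousLinearMap.adjoint (boundedTE hE) y)
      = ContinuousLinearMap.adjoint (boundedTE hE) y := by
  have hm := adjoint_mem_of_bounding hTdense hE y
  have hm2 := adjoint_mem_of_bounding hTdense hE (E y)
  have h := adjoint_commutes hTdense hE ⟨E y, hm⟩ hm2
  rw [adjoint_apply_E hTdense hE y hm] at h
  rw [h]
  have e : (⟨E (E y), hm2⟩ : T.adjoint.domain) = ⟨E y, hm⟩ :=
    Subtype.ext (idem_apply hE.idem y)
  rw [e, adjoint_apply_E hTdense hE y hm]

lemma adjTE_mem_T_domain (hTdense : Dense (T.domain : Set X))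
    (hE : IsBoundingProjection T E) (y : X) :
    ContinuousLinearMap.adjoint (boundedTE hE) y ∈ T.domain := by
  rw [← E_fix_adjTE hTdense hE y]; exact hE.mem_domain _

lemma pCompAdjT_mem (hTdense : Dense (T.domain : Set X))
    (hE : IsBoundingProjection T E) (x : X) : E x ∈ (pComp T.adjoint T).domain :=
  ⟨hE.mem_domain x, TE_mem_adjoint_domain hTdense hE x⟩

lemma pCompAdjT_apply_E (hTdense : Dense (T.domain : Set X))
    (hE : IsBoundingProjection T E) (x : X) (h : E x ∈ (pComp T.adjoint T).domain) :
    pComp T.adjoint T ⟨E x, h⟩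
      = ContinuousLinearMap.adjoint (boundedTE hE) (boundedTE hE x) := by
  rw [pComp_apply T.adjoint T (hE.mem_domain x) (TE_mem_adjoint_domain hTdense hE x) h]
  have hm : E (boundedTE hE x) ∈ T.adjoint.domain := adjoint_mem_of_bounding hTdense hE _
  have e : (⟨T ⟨E x, hE.mem_domain x⟩, TE_mem_adjoint_domain hTdense hE x⟩ : T.adjoint.domain)
      = ⟨E (boundedTE hE x), hm⟩ := Subtype.ext (E_fix_TE hE x).symm
  rw [e, adjoint_apply_E hTdense hE (boundedTE hE x) hm]

lemma pCompAdjT_commutes (hTdense : Dense (T.domain : Set X))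
    (hE : IsBoundingProjection T E) (z : (pComp T.adjoint T).domain)
    (hmem : E (z : X) ∈ (pComp T.adjoint T).domain) :
    E (pComp T.adjoint T z) = pComp T.adjoint T ⟨E (z : X), hmem⟩ := by
  obtain ⟨h1, h2⟩ := z.2
  have hc : E (T ⟨(z : X), h1⟩) = boundedTE hE (z : X) := hE.commutes ⟨(z : X), h1⟩
  have hm : E (T ⟨(z : X), h1⟩) ∈ T.adjoint.domain := by
    rw [hc]; exact TE_mem_adjoint_domain hTdense hE _
  have e1 : pComp T.adjoint T z = T.adjoint ⟨T ⟨(z : X), h1⟩, h2⟩ := rfl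
  rw [e1, adjoint_commutes hTdense hE ⟨T ⟨(z : X), h1⟩, h2⟩ hm,
    pComp_apply T.adjoint T (hE.mem_domain (z : X))
      (TE_mem_adjoint_domain hTdense hE (z : X)) hmem]
  exact congrArg _ (Subtype.ext hc)

lemma isBoundingProjection_pCompAdjT (hTdense : Dense (T.domain : Set X))
    (hE : IsBoundingProjection T E) : IsBoundingProjection (pComp T.adjoint T) E where
  idem := hE.idem
  selfAdjoint := hE.selfAdjoint
  mem_domain := pCompAdjT_mem hTdense hE
  bounded := by
    refine ⟨‖ContinuousLinearMap.adjoint (boundedTE hE)‖ * ‖boundedTE hE‖, fun x => ?_⟩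
    rw [pCompAdjT_apply_E hTdense hE x (pCompAdjT_mem hTdense hE x)]
    calc ‖ContinuousLinearMap.adjoint (boundedTE hE) (boundedTE hE x)‖
        ≤ ‖ContinuousLinearMap.adjoint (boundedTE hE)‖ * ‖boundedTE hE x‖ :=
          (ContinuousLinearMap.adjoint (boundedTE hE)).le_opNorm _
      _ ≤ ‖ContinuousLinearMap.adjoint (boundedTE hE)‖ * (‖boundedTE hE‖ * ‖x‖) :=
          mul_le_mul_of_nonneg_left ((boundedTE hE).le_opNorm x) (norm_nonneg _)
      _ = ‖ContinuousLinearMap.adjoint (boundedTE hE)‖ * ‖boundedTE hE‖ * ‖x‖ :=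
          (mul_assoc _ _ _).symm
  commutes := fun z => pCompAdjT_commutes hTdense hE z (pCompAdjT_mem hTdense hE _)

lemma pCompTAdj_mem (hTdense : Dense (T.domain : Set X))
    (hE : IsBoundingProjection T E) (y : X) : E y ∈ (pComp T T.adjoint).domain := by
  refine ⟨adjoint_mem_of_bounding hTdense hE y, ?_⟩
  rw [adjoint_apply_E hTdense hE y (adjoint_mem_of_bounding hTdense hE y)]
  exact adjTE_mem_T_domain hTdense hE y

lemma pCompTAdj_apply_E (hTdense : Dense (T.domain : Set X))
    (hE : IsBoundingProjection T E) (y : X) (h : E y ∈ (pComp T T.adjoint).domain) :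
    pComp T T.adjoint ⟨E y, h⟩
      = boundedTE hE (ContinuousLinearMap.adjoint (boundedTE hE) y) := by
  have hm := adjoint_mem_of_bounding hTdense hE y
  have hm2 : T.adjoint ⟨E y, hm⟩ ∈ T.domain := by
    rw [adjoint_apply_E hTdense hE y hm]; exact adjTE_mem_T_domain hTdense hE y
  rw [pComp_apply T T.adjoint hm hm2 h]
  have e : (⟨T.adjoint ⟨E y, hm⟩, hm2⟩ : T.domain)
      = ⟨E (ContinuousLinearMap.adjoint (boundedTE hE) y),
          hE.mem_domain (ContinuousLinearMap.adjoint (boundedTE hE) y)⟩ :=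
    Subtype.ext (by
      show T.adjoint ⟨E y, hm⟩ = E (ContinuousLinearMap.adjoint (boundedTE hE) y)
      rw [adjoint_apply_E hTdense hE y hm, E_fix_adjTE hTdense hE y])
  rw [e]
  rfl

lemma pCompTAdj_commutes (hTdense : Dense (T.domain : Set X))
    (hE : IsBoundingProjection T E) (z : (pComp T T.adjoint).domain)
    (hmem : E (z : X) ∈ (pComp T T.adjoint).domain) :
    E (pComp T T.adjoint z) = pComp T T.adjoint ⟨E (z : X), hmem⟩ := by
  obtain ⟨h1, h2⟩ := z.2
  have e1 : pComp T T.adjoint z = T ⟨T.adjoint ⟨(z : X), h1⟩, h2⟩ := rfl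
  have hcadj : E (T.adjoint ⟨(z : X), h1⟩)
      = T.adjoint ⟨E (z : X), adjoint_mem_of_bounding hTdense hE (z : X)⟩ :=
    adjoint_commutes hTdense hE ⟨(z : X), h1⟩ (adjoint_mem_of_bounding hTdense hE (z : X))
  have hm : E (T.adjoint ⟨(z : X), h1⟩) ∈ T.domain := hE.mem_domain _
  have hm2 : T.adjoint ⟨E (z : X), adjoint_mem_of_bounding hTdense hE (z : X)⟩ ∈ T.domain := by
    rw [← hcadj]; exact hm
  rw [e1, hE.commutes ⟨T.adjoint ⟨(z : X), h1⟩, h2⟩,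
    pComp_apply T T.adjoint (adjoint_mem_of_bounding hTdense hE (z : X)) hm2 hmem]
  exact congrArg _ (Subtype.ext hcadj)

lemma isBoundingProjection_pCompTAdj (hTdense : Dense (T.domain : Set X))
    (hE : IsBoundingProjection T E) : IsBoundingProjection (pComp T T.adjoint) E where
  idem := hE.idem
  selfAdjoint := hE.selfAdjoint
  mem_domain := pCompTAdj_mem hTdense hE
  bounded := by
    refine ⟨‖boundedTE hE‖ * ‖ContinuousLinearMap.adjoint (boundedTE hE)‖, fun y => ?_⟩
    rw [pCompTAdj_apply_E hTdense hE y (pCompTAdj_mem hTdense hE y)]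
    calc ‖boundedTE hE (ContinuousLinearMap.adjoint (boundedTE hE) y)‖
        ≤ ‖boundedTE hE‖ * ‖ContinuousLinearMap.adjoint (boundedTE hE) y‖ :=
          (boundedTE hE).le_opNorm _
      _ ≤ ‖boundedTE hE‖ * (‖ContinuousLinearMap.adjoint (boundedTE hE)‖ * ‖y‖) :=
          mul_le_mul_of_nonneg_left
            ((ContinuousLinearMap.adjoint (boundedTE hE)).le_opNorm y) (norm_nonneg _)
      _ = ‖boundedTE hE‖ * ‖ContinuousLinearMap.adjoint (boundedTE hE)‖ * ‖y‖ :=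
          (mul_assoc _ _ _).symm
  commutes := fun z => pCompTAdj_commutes hTdense hE z (pCompTAdj_mem hTdense hE _)

lemma adjoint_isClosed (hTdense : Dense (T.domain : Set X)) : T.adjoint.IsClosed := by
  have hset : (T.adjoint.graph : Set (X × X)) =
      ⋂ x : T.domain, {p : X × X | ⟪p.2, (x : X)⟫ = ⟪p.1, T x⟫} := by
    ext p
    simp only [Set.mem_iInter, Set.mem_setOf_eq, SetLike.mem_coe, LinearPMap.mem_graph_iff]
    constructor
    · rintro ⟨y, hy1, hy2⟩ x
      rw [← hy1, ← hy2]
      exact LinearPMap.adjoint_isFormalAdjoint hTdense y x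
    · intro h
      have hy : p.1 ∈ T.adjoint.domain :=
        LinearPMap.mem_adjoint_domain_of_exists _ ⟨p.2, h⟩
      exact ⟨⟨p.1, hy⟩, rfl, LinearPMap.adjoint_apply_eq hTdense ⟨p.1, hy⟩ h⟩
  rw [LinearPMap.IsClosed, hset]
  refine isClosed_iInter fun x => isClosed_eq ?_ ?_
  · exact Continuous.inner continuous_snd continuous_const
  · exact Continuous.inner continuous_fst continuous_const

lemma cauchy_of_sq {a b c : ℕ → X} (ha : CauchySeq a) (hc : CauchySeq c)
    (h : ∀ j k, ‖b j - b k‖ ^ 2 ≤ ‖c j - c k‖ * ‖a j - a k‖) : CauchySeq b := by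
  rw [Metric.cauchySeq_iff] at ha hc ⊢
  intro ε hε
  obtain ⟨N1, h1⟩ := ha ε hε
  obtain ⟨N2, h2⟩ := hc ε hε
  refine ⟨max N1 N2, fun m hm n hn => ?_⟩
  have h1' := h1 m (le_trans (le_max_left _ _) hm) n (le_trans (le_max_left _ _) hn)
  have h2' := h2 m (le_trans (le_max_right _ _) hm) n (le_trans (le_max_right _ _) hn)
  rw [dist_eq_norm] at h1' h2' ⊢
  refine lt_of_pow_lt_pow_left₀ 2 hε.le ?_
  calc ‖b m - b n‖ ^ 2 ≤ ‖c m - c n‖ * ‖a m - a n‖ := h m n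
    _ < ε * ε := mul_lt_mul'' h2' h1' (norm_nonneg _) (norm_nonneg _)
    _ = ε ^ 2 := (sq ε).symm

lemma pComp_isClosed {S T : X →ₗ.[ℝ] X} (hS : S.IsClosed) (hT : T.IsClosed)
    (hinner : ∀ (x : T.domain) (h : T x ∈ S.domain), ⟪S ⟨T x, h⟩, (x : X)⟫ = ⟪T x, T x⟫) :
    (pComp S T).IsClosed := by
  apply IsSeqClosed.isClosed
  intro p q hp hq
  -- extract domain elements
  have hmem : ∀ n, ∃ y : (pComp S T).domain, ((y : X), pComp S T y) = p n := fun n =>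
    (LinearPMap.mem_graph_iff' _).mp (hp n)
  choose y hy using hmem
  set u : ℕ → X := fun n => ((y n : X)) with hu
  set w : ℕ → X := fun n => pComp S T (y n) with hw
  have h1 : ∀ n, u n ∈ T.domain := fun n => (y n).2.1
  have hb : ∀ n, T ⟨u n, h1 n⟩ ∈ S.domain := fun n => (y n).2.2
  set b : ℕ → X := fun n => T ⟨u n, h1 n⟩ with hbdef
  have hwval : ∀ n, S ⟨b n, hb n⟩ = w n := fun n => rfl
  -- convergence of u and w
  have hqu : Filter.Tendsto u Filter.atTop (nhds q.1) := by
    have := (continuous_fst.tendsto q).comp hq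
    refine this.congr fun n => ?_
    show (p n).1 = u n
    rw [← hy n]
  have hqw : Filter.Tendsto w Filter.atTop (nhds q.2) := by
    have := (continuous_snd.tendsto q).comp hq
    refine this.congr fun n => ?_
    show (p n).2 = w n
    rw [← hy n]
  -- the key inner product identity
  have key : ∀ j k, ‖b j - b k‖ ^ 2 = ⟪w j - w k, u j - u k⟫ := by
    intro j k
    have hd : (⟨u j, h1 j⟩ - ⟨u k, h1 k⟩ : T.domain) = ⟨u j - u k, T.domain.sub_mem (h1 j) (h1 k)⟩ :=
      rfl
    have hTd : T (⟨u j, h1 j⟩ - ⟨u k, h1 k⟩) = b j - b k := T.map_sub _ _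
    have hbd : (⟨b j, hb j⟩ - ⟨b k, hb k⟩ : S.domain) = ⟨b j - b k, S.domain.sub_mem (hb j) (hb k)⟩ :=
      rfl
    have hSd : S (⟨b j, hb j⟩ - ⟨b k, hb k⟩) = w j - w k := by
      rw [S.map_sub, hwval, hwval]
    have hin := hinner (⟨u j, h1 j⟩ - ⟨u k, h1 k⟩)
      (by rw [hTd]; exact S.domain.sub_mem (hb j) (hb k))
    rw [real_inner_self_eq_norm_sq] at hin
    have e : (⟨T (⟨u j, h1 j⟩ - ⟨u k, h1 k⟩), by rw [hTd]; exact S.domain.sub_mem (hb j) (hb k)⟩ :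
        S.domain) = ⟨b j, hb j⟩ - ⟨b k, hb k⟩ := Subtype.ext hTd
    rw [e, hSd, hTd] at hin
    have ecoe : ((⟨u j, h1 j⟩ - ⟨u k, h1 k⟩ : T.domain) : X) = u j - u k := rfl
    rw [ecoe] at hin
    exact hin.symm
  have hbcauchy : CauchySeq b := by
    refine cauchy_of_sq hqu.cauchySeq hqw.cauchySeq fun j k => ?_
    rw [key j k]
    exact real_inner_le_norm _ _
  obtain ⟨z, hz⟩ := cauchySeq_tendsto_of_complete hbcauchy
  -- use closedness of T
  have hzT : (q.1, z) ∈ T.graph := by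
    refine hT.mem_of_tendsto (hqu.prodMk_nhds hz) (Filter.Eventually.of_forall fun n => ?_)
    exact T.mem_graph ⟨u n, h1 n⟩
  obtain ⟨x1, hx1, hx1'⟩ := (LinearPMap.mem_graph_iff _).mp hzT
  have hzS : (z, q.2) ∈ S.graph := by
    refine hS.mem_of_tendsto (hz.prodMk_nhds hqw) (Filter.Eventually.of_forall fun n => ?_)
    have := S.mem_graph ⟨b n, hb n⟩
    rwa [hwval] at this
  obtain ⟨x2, hx2, hx2'⟩ := (LinearPMap.mem_graph_iff _).mp hzS
  -- conclude
  rw [SetLike.mem_coe, LinearPMap.mem_graph_iff]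
  have hq1T : q.1 ∈ T.domain := by rw [← hx1]; exact x1.2
  have hTq1 : T ⟨q.1, hq1T⟩ = z := by
    rw [show (⟨q.1, hq1T⟩ : T.domain) = x1 from Subtype.ext hx1.symm]; exact hx1'
  have hx2s : (x2 : X) = z := hx2
  have hTq1S : T ⟨q.1, hq1T⟩ ∈ S.domain := by rw [hTq1, ← hx2s]; exact x2.2
  refine ⟨⟨q.1, hq1T, hTq1S⟩, rfl, ?_⟩
  refine (pComp_apply S T hq1T hTq1S _).trans ?_
  have e2 : (⟨T ⟨q.1, hq1T⟩, hTq1S⟩ : S.domain) = x2 := Subtype.ext (by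
    show T ⟨q.1, hq1T⟩ = (x2 : X)
    rw [hTq1]; exact hx2s.symm)
  rw [e2]
  exact hx2'

lemma proj_tendsto (En : ℕ → X →L[ℝ] X)
    (hidem : ∀ n, IsIdempotentElem (En n)) (hsa : ∀ n, IsSelfAdjoint (En n))
    (hmono : ∀ n, LinearMap.range (En n).toLinearMap ≤ LinearMap.range (En (n + 1)).toLinearMap)
    (hdense : Dense (⋃ n, Set.range (En n))) (x : X) :
    Filter.Tendsto (fun n => En n x) Filter.atTop (nhds x) := by
  have hr : Monotone fun n => LinearMap.range (En n).toLinearMap :=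
    monotone_nat_of_le_succ hmono
  rw [Metric.tendsto_atTop]
  intro ε hε
  obtain ⟨u, hus, hud⟩ := Metric.mem_closure_iff.mp (hdense x) (ε / 2) (by positivity)
  obtain ⟨m, v, hv⟩ : ∃ m v, En m v = u := by
    obtain ⟨m, w, hw⟩ := Set.mem_iUnion.mp hus
    exact ⟨m, w, hw⟩
  refine ⟨m, fun n hn => ?_⟩
  have humem : u ∈ LinearMap.range (En n).toLinearMap :=
    hr hn ⟨v, hv⟩
  obtain ⟨v', hv'⟩ := humem
  have hfix : En n u = u := by
    rw [← hv']
    exact idem_apply (hidem n) v'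
  calc dist (En n x) x ≤ dist (En n x) u + dist u x := dist_triangle _ _ _
    _ ≤ ‖x - u‖ + dist u x := by
        rw [show dist (En n x) u = ‖En n x - En n u‖ by rw [hfix, dist_eq_norm],
          ← map_sub]
        exact add_le_add_left (proj_norm_le (hidem n) (hsa n) _) _
    _ = dist x u + dist u x := by rw [dist_eq_norm x u]
    _ < ε / 2 + ε / 2 := by
        rw [dist_comm u x]
        exact add_lt_add hud hud
    _ = ε := add_halves ε

lemma core_of_boundingSequence {f : X →ₗ.[ℝ] X} (hf : f.IsClosed) {En : ℕ → X →L[ℝ] X}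
    (hb : ∀ n, IsBoundingProjection f (En n))
    (hlim : ∀ x : X, Filter.Tendsto (fun n => En n x) Filter.atTop (nhds x)) :
    (f.domRestrict (⨆ n, LinearMap.range (En n).toLinearMap)).closure = f := by
  set D := ⨆ n, LinearMap.range (En n).toLinearMap with hD
  have hres_le : f.domRestrict D ≤ f := LinearPMap.domRestrict_le
  have hclos : (f.domRestrict D).IsClosable := hf.isClosable.leIsClosable hres_le
  have hfcl : f.closure = f := by
    apply LinearPMap.eq_of_eq_graph
    rw [← hf.isClosable.graph_closure_eq_closure_graph]
    apply SetLike.coe_injective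
    rw [Submodule.topologicalClosure_coe]
    exact hf.closure_eq
  refine le_antisymm ?_ ?_
  · have h1 := hf.isClosable.closure_mono hres_le
    rwa [hfcl] at h1
  · apply LinearPMap.le_of_le_graph
    intro p hp
    obtain ⟨z, hz⟩ := (LinearPMap.mem_graph_iff' _).mp hp
    rw [← hclos.graph_closure_eq_closure_graph, ← SetLike.mem_coe,
      Submodule.topologicalClosure_coe]
    have hmemn : ∀ n, ((En n (z : X), En n (f z)) : X × X) ∈
        ((f.domRestrict D).graph : Set (X × X)) := by
      intro n
      have hmemD : En n (z : X) ∈ D := by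
        rw [hD]
        exact Submodule.mem_iSup_of_mem n (LinearMap.mem_range_self _ _)
      have hmemf : En n (z : X) ∈ f.domain := (hb n).mem_domain _
      rw [SetLike.mem_coe, LinearPMap.mem_graph_iff']
      refine ⟨⟨En n (z : X), ⟨hmemD, hmemf⟩⟩, ?_⟩
      have hval : f.domRestrict D ⟨En n (z : X), ⟨hmemD, hmemf⟩⟩ = f ⟨En n (z : X), hmemf⟩ :=
        LinearPMap.domRestrict_apply rfl
      rw [hval, ← (hb n).commutes z]
    have htend : Filter.Tendsto (fun n => ((En n (z : X), En n (f z)) : X × X))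
        Filter.atTop (nhds ((z : X), f z)) :=
      (hlim (z : X)).prodMk_nhds (hlim (f z))
    rw [← hz]
    exact mem_closure_of_tendsto htend (Filter.Eventually.of_forall hmemn)

end Aux

/-- Lemma 21 (real Hilbert space setting): a bounding projection for a closed densely defined
operator `T` is also bounding for `T*`, `T*T` and `TT*`; the adjoint of the bounded operator
`TE` is `T*E`; and the union of the ranges of a bounding sequence is a core for `T`, `T*`,
`T*T` and `TT*`. -/
theorem boundingProjection_adjoint (T : X →ₗ.[ℝ] X) (hTclosed : T.IsClosed)
    (hTdense : Dense (T.domain : Set X)) (E : X →L[ℝ] X)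
    (hE : IsBoundingProjection T E) :
    IsBoundingProjection T.adjoint E ∧
    (∀ (hmem : ∀ y, E y ∈ T.adjoint.domain) (x y : X),
      ⟪T ⟨E x, hE.mem_domain x⟩, y⟫ = ⟪x, T.adjoint ⟨E y, hmem y⟩⟫) ∧
    IsBoundingProjection (pComp T.adjoint T) E ∧
    IsBoundingProjection (pComp T T.adjoint) E ∧
    (∀ En : ℕ → X →L[ℝ] X, IsBoundingSequence T En →
      (T.domRestrict (⨆ n, LinearMap.range (En n).toLinearMap)).closure = T ∧
      (T.adjoint.domRestrict (⨆ n, LinearMap.range (En n).toLinearMap)).closure = T.adjoint ∧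
      ((pComp T.adjoint T).domRestrict
        (⨆ n, LinearMap.range (En n).toLinearMap)).closure = pComp T.adjoint T ∧
      ((pComp T T.adjoint).domRestrict
        (⨆ n, LinearMap.range (En n).toLinearMap)).closure = pComp T T.adjoint) := by
  have hinner1 : ∀ (x : T.domain) (h : T x ∈ T.adjoint.domain),
      ⟪T.adjoint ⟨T x, h⟩, (x : X)⟫ = ⟪T x, T x⟫ := fun x h =>
    LinearPMap.adjoint_isFormalAdjoint hTdense ⟨T x, h⟩ x
  have hinner2 : ∀ (x : T.adjoint.domain) (h : T.adjoint x ∈ T.domain),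
      ⟪T ⟨T.adjoint x, h⟩, (x : X)⟫ = ⟪T.adjoint x, T.adjoint x⟫ := by
    intro x h
    rw [real_inner_comm]
    exact (LinearPMap.adjoint_isFormalAdjoint hTdense x ⟨T.adjoint x, h⟩).symm
  refine ⟨isBoundingProjection_adjoint hTdense hE, ?_, isBoundingProjection_pCompAdjT hTdense hE,
    isBoundingProjection_pCompTAdj hTdense hE, ?_⟩
  · intro hmem x y
    rw [adjoint_apply_E hTdense hE y (hmem y), T_apply_E hE (hE.mem_domain x),
      ContinuousLinearMap.adjoint_inner_right]
  · intro En hEn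
    have hlim : ∀ x : X, Filter.Tendsto (fun n => En n x) Filter.atTop (nhds x) :=
      proj_tendsto En (fun n => (hEn.bounding n).idem) (fun n => (hEn.bounding n).selfAdjoint)
        hEn.mono hEn.dense_union
    have hadjcl : T.adjoint.IsClosed := adjoint_isClosed hTdense
    exact ⟨core_of_boundingSequence hTclosed hEn.bounding hlim,
      core_of_boundingSequence hadjcl
        (fun n => isBoundingProjection_adjoint hTdense (hEn.bounding n)) hlim,
      core_of_boundingSequence (pComp_isClosed hadjcl hTclosed hinner1)
        (fun n => isBoundingProjection_pCompAdjT hTdense (hEn.bounding n)) hlim,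
      core_of_boundingSequence (pComp_isClosed hTclosed hadjcl hinner2)
        (fun n => isBoundingProjection_pCompTAdj hTdense (hEn.bounding n)) hlim⟩

end Stmt13
end

section
/- Let X be a real Hilbert space and let (E_n) be a sequence of orthogonal projections on X with increasing ranges (E_n(X) ⊆ E_{n+1}(X)) such that ℰ := ⋃_n E_n(X) is dense in X. Let G be a linear operator with domain ℰ such that for each n the everywhere-defined operator GE_n : x ↦ G(E_n x) is bounded and self-adjoint. Then G is closable and its closure is a self-adjoint operator. Moreover, if T is a closed operator with ℰ ⊆ D(T) such that ℰ is a core for T and TE_n : x ↦ T(E_n x) is a bounded self-adjoint operator for each n, then T is self-adjoint. (Lemma 6, in the real Hilbert space setting) -/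
open scoped InnerProductSpace RealInnerProductSpace

namespace Stmt15

variable {X : Type*} [NormedAddCommGroup X] [InnerProductSpace ℝ X] [CompleteSpace X]

/-- Auxiliary general lemma: a densely defined operator whose domain is the union of an
increasing sequence of ranges of orthogonal projections, and which is symmetric in the sense
below, is closable with self-adjoint closure. -/
theorem aux_selfAdjoint (E : ℕ → X →L[ℝ] X)
    (hidem : ∀ n, IsIdempotentElem (E n)) (hsa : ∀ n, IsSelfAdjoint (E n))
    (hmono : ∀ n, LinearMap.range (E n).toLinearMap ≤ LinearMap.range (E (n + 1)).toLinearMap)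
    (hdense : Dense (⋃ n, Set.range (E n)))
    (G : X →ₗ.[ℝ] X)
    (hGdom : G.domain = ⨆ n, LinearMap.range (E n).toLinearMap)
    (hGmem : ∀ n x, E n x ∈ G.domain)
    (hGsym : ∀ n x y, ⟪G ⟨E n x, hGmem n x⟩, y⟫ = ⟪x, G ⟨E n y, hGmem n y⟩⟫) :
    G.IsClosable ∧ G.closure.adjoint = G.closure := by
  have hrange : Monotone fun n => LinearMap.range (E n).toLinearMap :=
    monotone_nat_of_le_succ hmono
  have hEsym : ∀ n (x y : X), ⟪E n x, y⟫ = ⟪x, E n y⟫ := fun n => (hsa n).isSymmetric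
  have hfix : ∀ {m n : ℕ}, m ≤ n → ∀ x : X,
      x ∈ LinearMap.range (E m).toLinearMap → E n x = x := by
    intro m n hmn x hx
    obtain ⟨w, hw⟩ := hrange hmn hx
    have h2 : E n (E n w) = E n w := by
      rw [← ContinuousLinearMap.mul_apply, hidem n]
    rw [← hw]; exact h2
  have hnorm : ∀ n (x : X), ‖E n x‖ ≤ ‖x‖ := by
    intro n x
    have hid : E n (E n x) = E n x := by
      rw [← ContinuousLinearMap.mul_apply, hidem n]
    have h1 : ‖E n x‖ * ‖E n x‖ = ⟪E n x, E n x⟫ :=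
      (real_inner_self_eq_norm_mul_norm _).symm
    have h2 : ⟪E n x, E n x⟫ = ⟪x, E n x⟫ := by
      rw [hEsym n x (E n x), hid]
    have h3 : ⟪x, E n x⟫ ≤ ‖x‖ * ‖E n x‖ := real_inner_le_norm x (E n x)
    nlinarith [norm_nonneg (E n x), norm_nonneg x]
  have hdir : Directed (· ≤ ·) fun n => LinearMap.range (E n).toLinearMap :=
    hrange.directed_le
  have hmemdom : ∀ x : G.domain, ∃ n, (x : X) ∈ LinearMap.range (E n).toLinearMap := by
    intro x
    have hx : (x : X) ∈ ⨆ n, LinearMap.range (E n).toLinearMap := hGdom.le x.2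
    rw [Submodule.mem_iSup_of_directed _ hdir] at hx
    exact hx
  have happ : ∀ (u : X) (hu : u ∈ G.domain) (v : X) (hv : v ∈ G.domain), u = v →
      G ⟨u, hu⟩ = G ⟨v, hv⟩ := by rintro u hu v hv rfl; rfl
  have hsymG : ∀ x y : G.domain, ⟪G x, (y : X)⟫ = ⟪(x : X), G y⟫ := by
    intro x y
    obtain ⟨m, hm⟩ := hmemdom x
    obtain ⟨k, hk⟩ := hmemdom y
    have hx : E (max m k) (x : X) = (x : X) := hfix (le_max_left m k) _ hm
    have hy : E (max m k) (y : X) = (y : X) := hfix (le_max_right m k) _ hk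
    have e1 : G ⟨E (max m k) (x : X), hGmem _ _⟩ = G x := happ _ _ _ x.2 hx
    have e2 : G ⟨E (max m k) (y : X), hGmem _ _⟩ = G y := happ _ _ _ y.2 hy
    rw [← e1, ← e2]
    exact hGsym (max m k) (x : X) (y : X)
  have hsub : (⋃ n, Set.range (E n)) ⊆ (G.domain : Set X) := by
    intro x hx
    rw [Set.mem_iUnion] at hx
    obtain ⟨n, w, rfl⟩ := hx
    exact hGmem n w
  have hGdense : Dense (G.domain : Set X) := Dense.mono hsub hdense
  have htend : ∀ x : X, Filter.Tendsto (fun n => E n x) Filter.atTop (nhds x) := by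
    intro x
    rw [NormedAddCommGroup.tendsto_atTop]
    intro ε hε
    have hx : x ∈ closure (⋃ n, Set.range (E n)) := hdense x
    rw [Metric.mem_closure_iff] at hx
    obtain ⟨u, hu, hdist⟩ := hx (ε / 2) (by linarith)
    rw [Set.mem_iUnion] at hu
    obtain ⟨m, w, rfl⟩ := hu
    refine ⟨m, fun n hn => ?_⟩
    have hfixu : E n (E m w) = E m w := hfix hn _ ⟨w, rfl⟩
    have hsplit : E n x - x = E n (x - E m w) + (E m w - x) := by
      rw [map_sub, hfixu]; abel
    have hxu : ‖x - E m w‖ = dist x (E m w) := (dist_eq_norm _ _).symm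
    have hux : ‖E m w - x‖ = dist x (E m w) := by
      rw [dist_eq_norm, norm_sub_rev]
    calc ‖E n x - x‖ = ‖E n (x - E m w) + (E m w - x)‖ := by rw [hsplit]
      _ ≤ ‖E n (x - E m w)‖ + ‖E m w - x‖ := norm_add_le _ _
      _ ≤ ‖x - E m w‖ + ‖E m w - x‖ := by gcongr ?_ + _; exact hnorm n _
      _ < ε := by rw [hxu, hux]; linarith
  -- closability
  have key : ∀ p : X × X, p ∈ G.graph.topologicalClosure → p.1 = 0 → p.2 = 0 := by
    intro p hp hp1
    have hmemc : p ∈ closure (G.graph : Set (X × X)) := hp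
    refine hGdense.eq_zero_of_inner_left ℝ (fun v' hv' => ?_)
    let v : G.domain := ⟨v', hv'⟩
    have hclosed : IsClosed {q : X × X | ⟪q.2, (v : X)⟫ - ⟪q.1, G v⟫ = 0} :=
      isClosed_eq ((continuous_snd.inner continuous_const).sub
        (continuous_fst.inner continuous_const)) continuous_const
    have hcl : (G.graph : Set (X × X)) ⊆ {q : X × X | ⟪q.2, (v : X)⟫ - ⟪q.1, G v⟫ = 0} := by
      intro q hq
      rw [SetLike.mem_coe, LinearPMap.mem_graph_iff] at hq
      obtain ⟨u, hu1, hu2⟩ := hq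
      have hu1' : (u : X) = q.1 := hu1
      have hu2' : G u = q.2 := hu2
      simp only [Set.mem_setOf_eq, ← hu1', ← hu2']
      exact sub_eq_zero.2 (hsymG u v)
    have h0 := closure_minimal hcl hclosed hmemc
    simp only [Set.mem_setOf_eq, hp1, inner_zero_left, sub_zero] at h0
    exact h0
  have hclosable : G.IsClosable :=
    ⟨G.graph.topologicalClosure.toLinearPMap, (Submodule.toLinearPMap_graph_eq _ key).symm⟩
  have hGA : G ≤ G.closure := G.le_closure
  have hAdense : Dense (G.closure.domain : Set X) :=
    Dense.mono (fun x hx => hGA.1 hx) hGdense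
  have hAclosed : G.closure.IsClosed := hclosable.closure_isClosed
  have hgraph : G.closure.graph = G.graph.topologicalClosure :=
    hclosable.graph_closure_eq_closure_graph.symm
  -- closure is symmetric
  have hsymA : ∀ x y : G.closure.domain, ⟪G.closure x, (y : X)⟫ = ⟪(x : X), G.closure y⟫ := by
    intro x y
    have hx : ((x : X), G.closure x) ∈ closure (G.graph : Set (X × X)) := by
      have h := G.closure.mem_graph x
      rw [hgraph] at h
      exact h
    have hy : ((y : X), G.closure y) ∈ closure (G.graph : Set (X × X)) := by
      have h := G.closure.mem_graph y
      rw [hgraph] at h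
      exact h
    have hclosed : IsClosed {q : (X × X) × (X × X) | ⟪q.1.2, q.2.1⟫ - ⟪q.1.1, q.2.2⟫ = 0} :=
      isClosed_eq ((continuous_fst.snd.inner continuous_snd.fst).sub
        (continuous_fst.fst.inner continuous_snd.snd)) continuous_const
    have hsubS : (G.graph : Set (X × X)) ×ˢ (G.graph : Set (X × X)) ⊆
        {q : (X × X) × (X × X) | ⟪q.1.2, q.2.1⟫ - ⟪q.1.1, q.2.2⟫ = 0} := by
      rintro ⟨p, q⟩ ⟨hp, hq⟩
      rw [SetLike.mem_coe, LinearPMap.mem_graph_iff] at hp hq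
      obtain ⟨u, hu1, hu2⟩ := hp
      obtain ⟨w, hw1, hw2⟩ := hq
      have hu1' : (u : X) = p.1 := hu1
      have hu2' : G u = p.2 := hu2
      have hw1' : (w : X) = q.1 := hw1
      have hw2' : G w = q.2 := hw2
      simp only [Set.mem_setOf_eq, ← hu1', ← hu2', ← hw1', ← hw2']
      exact sub_eq_zero.2 (hsymG u w)
    have hmem : (((x : X), G.closure x), ((y : X), G.closure y)) ∈
        {q : (X × X) × (X × X) | ⟪q.1.2, q.2.1⟫ - ⟪q.1.1, q.2.2⟫ = 0} := by
      apply closure_minimal hsubS hclosed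
      rw [closure_prod_eq]
      exact ⟨hx, hy⟩
    simpa [sub_eq_zero] using hmem
  have hformal : G.closure.IsFormalAdjoint G.closure := fun x y => hsymA x y
  have hle1 : G.closure ≤ G.closure.adjoint := hformal.le_adjoint hAdense
  have hle2 : G.closure.adjoint ≤ G.closure := by
    have hadj := LinearPMap.adjoint_isFormalAdjoint hAdense
    have main : ∀ y : G.closure.adjoint.domain,
        ((y : X), G.closure.adjoint y) ∈ G.closure.graph := by
      intro y
      set z := G.closure.adjoint y with hz
      have hEn : ∀ n, G ⟨E n (y : X), hGmem n (y : X)⟩ = E n z := by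
        intro n
        apply ext_inner_left ℝ
        intro v
        have h1 : ⟪v, G ⟨E n (y : X), hGmem n (y : X)⟩⟫
            = ⟪G ⟨E n v, hGmem n v⟩, (y : X)⟫ := (hGsym n v (y : X)).symm
        have hmemA : E n v ∈ G.closure.domain := hGA.1 (hGmem n v)
        have hval : G ⟨E n v, hGmem n v⟩ = G.closure ⟨E n v, hmemA⟩ := hGA.2 rfl
        have h2 : ⟪G.closure ⟨E n v, hmemA⟩, (y : X)⟫ = ⟪E n v, z⟫ := by
          have h := hadj y ⟨E n v, hmemA⟩
          rw [real_inner_comm] at h ⊢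
          rw [← h, real_inner_comm]
        have h3 : ⟪(E n v : X), z⟫ = ⟪v, E n z⟫ := hEsym n v z
        rw [h1, hval, h2, h3]
      have hlim1 : Filter.Tendsto (fun n => E n (y : X)) Filter.atTop (nhds (y : X)) :=
        htend (y : X)
      have hlim2 : Filter.Tendsto (fun n => G ⟨E n (y : X), hGmem n (y : X)⟩)
          Filter.atTop (nhds z) := by
        have hfun : (fun n => G ⟨E n (y : X), hGmem n (y : X)⟩) = fun n => E n z :=
          funext hEn
        rw [hfun]; exact htend z
      have hmemn : ∀ n, ((E n (y : X)), G ⟨E n (y : X), hGmem n (y : X)⟩)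
          ∈ (G.closure.graph : Set (X × X)) := by
        intro n
        exact LinearPMap.le_graph_of_le hGA (G.mem_graph ⟨E n (y : X), hGmem n (y : X)⟩)
      exact hAclosed.mem_of_tendsto (hlim1.prodMk_nhds hlim2)
        (Filter.Eventually.of_forall hmemn)
    refine ⟨fun a ha => ?_, fun a b hab => ?_⟩
    · exact LinearPMap.mem_domain_of_mem_graph (main ⟨a, ha⟩)
    · have h := main a
      rw [hab] at h
      rw [LinearPMap.mem_graph_iff] at h
      obtain ⟨u, hu1, hu2⟩ := h
      have hu1' : (u : X) = (b : X) := hu1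
      have hu2' : G.closure u = G.closure.adjoint a := hu2
      rw [← hu2']
      exact congrArg _ (Subtype.ext hu1')
  exact ⟨hclosable, le_antisymm hle2 hle1⟩

/-- Lemma 6 (real Hilbert space setting): let `(E n)` be a sequence of orthogonal projections
with increasing ranges whose union `ℰ` is dense in `X`, and let `G` be a linear operator with
domain `ℰ` such that each everywhere-defined operator `x ↦ G (E n x)` is bounded and
self-adjoint. Then `G` is closable with self-adjoint closure. Moreover, any closed operator `T`
with `ℰ ⊆ D(T)` for which `ℰ` is a core and each `x ↦ T (E n x)` is bounded and self-adjoint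
is itself self-adjoint. -/
theorem selfAdjoint_closure_of_boundingSequence (E : ℕ → X →L[ℝ] X)
    (hidem : ∀ n, IsIdempotentElem (E n)) (hsa : ∀ n, IsSelfAdjoint (E n))
    (hmono : ∀ n, LinearMap.range (E n).toLinearMap ≤ LinearMap.range (E (n + 1)).toLinearMap)
    (hdense : Dense (⋃ n, Set.range (E n)))
    (G : X →ₗ.[ℝ] X)
    (hGdom : G.domain = ⨆ n, LinearMap.range (E n).toLinearMap)
    (hGmem : ∀ n x, E n x ∈ G.domain)
    (hGbdd : ∀ n, ∃ C : ℝ, ∀ x, ‖G ⟨E n x, hGmem n x⟩‖ ≤ C * ‖x‖)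
    (hGsym : ∀ n x y, ⟪G ⟨E n x, hGmem n x⟩, y⟫ = ⟪x, G ⟨E n y, hGmem n y⟩⟫) :
    (G.IsClosable ∧ G.closure.adjoint = G.closure) ∧
    (∀ T : X →ₗ.[ℝ] X, T.IsClosed →
      (⨆ n, LinearMap.range (E n).toLinearMap) ≤ T.domain →
      (T.domRestrict (⨆ n, LinearMap.range (E n).toLinearMap)).closure = T →
      ∀ hTmem : ∀ n x, E n x ∈ T.domain,
      (∀ n, ∃ C : ℝ, ∀ x, ‖T ⟨E n x, hTmem n x⟩‖ ≤ C * ‖x‖) →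
      (∀ n x y, ⟪T ⟨E n x, hTmem n x⟩, y⟫ = ⟪x, T ⟨E n y, hTmem n y⟩⟫) →
      T.adjoint = T) := by
  constructor
  · exact aux_selfAdjoint E hidem hsa hmono hdense G hGdom hGmem hGsym
  · intro T hTclosed hTle hTcore hTmem hTbdd hTsym
    have hdom : (T.domRestrict (⨆ n, LinearMap.range (E n).toLinearMap)).domain
        = ⨆ n, LinearMap.range (E n).toLinearMap := by
      rw [LinearPMap.domRestrict_domain]
      exact inf_eq_left.2 hTle
    have hmem' : ∀ n x, E n x ∈
        (T.domRestrict (⨆ n, LinearMap.range (E n).toLinearMap)).domain := by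
      intro n x
      rw [hdom]
      exact le_iSup (fun n => LinearMap.range (E n).toLinearMap) n ⟨x, rfl⟩
    have hval : ∀ n x, (T.domRestrict (⨆ n, LinearMap.range (E n).toLinearMap))
        ⟨E n x, hmem' n x⟩ = T ⟨E n x, hTmem n x⟩ := by
      intro n x
      exact LinearPMap.domRestrict_apply rfl
    have hsym' : ∀ n x y, ⟪(T.domRestrict (⨆ n, LinearMap.range (E n).toLinearMap))
        ⟨E n x, hmem' n x⟩, y⟫ = ⟪x, (T.domRestrict (⨆ n, LinearMap.range (E n).toLinearMap))
        ⟨E n y, hmem' n y⟩⟫ := by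
      intro n x y
      rw [hval, hval]
      exact hTsym n x y
    have h := (aux_selfAdjoint E hidem hsa hmono hdense
      (T.domRestrict (⨆ n, LinearMap.range (E n).toLinearMap)) hdom hmem' hsym').2
    rw [hTcore] at h
    exact h

end Stmt15
end

section
/- Let Λ be an extremally disconnected compact Hausdorff space. For self-adjoint functions (f, W_f) and (g, W_g) on Λ write f ≤ g if f(x) ≤ g(x) for every x ∈ (Λ∖W_f) ∩ (Λ∖W_g). If (f_n)_{n≥1} is a sequence of self-adjoint functions on Λ admitting an upper bound, i.e. a self-adjoint function f_0 with f_n ≤ f_0 for all n ≥ 1, then the sequence has a least upper bound: there exists a self-adjoint function f on Λ with f_n ≤ f for all n ≥ 1, and f ≤ h for every self-adjoint function h on Λ satisfying f_n ≤ h for all n ≥ 1. (function-level content of Proposition 42) -/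
open Filter Topology Set

/-- On a dense-in-itself setting over an extremally disconnected space, the limsup
envelope of a bounded function that is lower semicontinuous on a dense open set is continuous. -/
lemma envelope_spec {Λ : Type*} [TopologicalSpace Λ] [ExtremallyDisconnected Λ]
    {U : Set Λ} (hUd : Dense U)
    (u : Λ → ℝ) {a b : ℝ}
    (hua : ∀ x ∈ U, a ≤ u x) (hub : ∀ x ∈ U, u x ≤ b)
    (hlsc : ∀ c : ℝ, IsOpen {x | x ∈ U ∧ c < u x}) :
    ∃ G : Λ → ℝ, Continuous G ∧ (∀ x, a ≤ G x) ∧ (∀ x, G x ≤ b) ∧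
      (∀ x ∈ U, u x ≤ G x) ∧
      (∀ x ∈ U, ContinuousWithinAt u U x → G x = u x) ∧
      ∀ h : Λ → ℝ, Continuous h → (∀ x ∈ U, u x ≤ h x) → ∀ x, G x ≤ h x := by
  have hne : ∀ x : Λ, (𝓝[U] x).NeBot := fun x =>
    mem_closure_iff_nhdsWithin_neBot.mp (hUd x)
  have hbdd : ∀ x : Λ, IsBoundedUnder (· ≤ ·) (𝓝[U] x) u := fun x =>
    ⟨b, eventually_map.2 <| by filter_upwards [self_mem_nhdsWithin] using hub⟩
  have hbdd' : ∀ x : Λ, IsBoundedUnder (· ≥ ·) (𝓝[U] x) u := fun x =>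
    ⟨a, eventually_map.2 <| by filter_upwards [self_mem_nhdsWithin] using hua⟩
  have hcob : ∀ x : Λ, IsCoboundedUnder (· ≤ ·) (𝓝[U] x) u := fun x =>
    haveI := hne x; (hbdd' x).isCoboundedUnder_le
  set G : Λ → ℝ := fun x => limsup u (𝓝[U] x) with hGdef
  have hGa : ∀ x, a ≤ G x := fun x =>
    haveI := hne x
    le_limsup_of_frequently_le
      ((by filter_upwards [self_mem_nhdsWithin] using hua : ∀ᶠ y in 𝓝[U] x, a ≤ u y).frequently)
      (hbdd x)
  have hGb : ∀ x, G x ≤ b := fun x =>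
    limsup_le_of_le (hcob x) (by filter_upwards [self_mem_nhdsWithin] using hub)
  have hGu : ∀ x ∈ U, u x ≤ G x := by
    intro x hx
    haveI := hne x
    refine le_limsup_of_frequently_le ?_ (hbdd x)
    exact frequently_iff.mpr fun ht => ⟨x, mem_of_mem_nhdsWithin hx ht, le_rfl⟩
  -- continuity
  have hcont : Continuous G := by
    rw [continuous_iff_continuousAt]
    intro x
    rw [ContinuousAt, tendsto_order]
    constructor
    · -- lower semicontinuity at x, using extremal disconnectedness
      intro c hc
      set c' : ℝ := (c + G x) / 2 with hc'
      have hcc' : c < c' := by simp only [hc']; linarith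
      have hc'G : c' < G x := by simp only [hc']; linarith
      have hfreq : ∃ᶠ y in 𝓝[U] x, c' < u y := frequently_lt_of_lt_limsup (hcob x) hc'G
      set S : Set Λ := {y | y ∈ U ∧ c' < u y} with hS
      have hSopen : IsOpen S := hlsc c'
      have hxS : x ∈ closure S := by
        rw [mem_closure_iff_nhds]
        intro t ht
        have hev1 : ∀ᶠ y in 𝓝[U] x, y ∈ U ∧ y ∈ t := by
          filter_upwards [self_mem_nhdsWithin,
            (nhdsWithin_le_nhds ht : t ∈ 𝓝[U] x)] with y h1 h2 using ⟨h1, h2⟩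
        rcases (hfreq.and_eventually hev1).exists with ⟨y, hy1, hy2, hy3⟩
        exact ⟨y, hy3, hy2, hy1⟩
      have hV : IsOpen (closure S) := ExtremallyDisconnected.open_closure S hSopen
      have : ∀ y ∈ closure S, c' ≤ G y := by
        intro y hy
        haveI : (𝓝[S] y).NeBot := mem_closure_iff_nhdsWithin_neBot.mp hy
        refine le_limsup_of_frequently_le ?_ (hbdd y)
        have hmono : 𝓝[S] y ≤ 𝓝[U] y := nhdsWithin_mono _ (fun z hz => hz.1)
        have : ∀ᶠ z in 𝓝[S] y, c' ≤ u z := by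
          filter_upwards [self_mem_nhdsWithin] with z hz using (hz.2).le
        exact (this.frequently).filter_mono hmono
      filter_upwards [hV.mem_nhds hxS] with y hy
      exact lt_of_lt_of_le hcc' (this y hy)
    · -- upper semicontinuity at x
      intro c hc
      set c' : ℝ := (G x + c) / 2 with hc'
      have hGc' : G x < c' := by simp only [hc']; linarith
      have hc'c : c' < c := by simp only [hc']; linarith
      have hev : ∀ᶠ y in 𝓝[U] x, u y < c' := eventually_lt_of_limsup_lt hGc' (hbdd x)
      rw [eventually_nhdsWithin_iff] at hev
      rcases eventually_nhds_iff.mp hev with ⟨t, ht, htopen, hxt⟩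
      have : ∀ y ∈ t, G y ≤ c' := by
        intro y hy
        refine limsup_le_of_le (hcob y) ?_
        have : t ∈ 𝓝[U] y := nhdsWithin_le_nhds (htopen.mem_nhds hy)
        filter_upwards [this, self_mem_nhdsWithin] with z hz hzU using (ht z hz hzU).le
      filter_upwards [htopen.mem_nhds hxt] with y hy
      exact lt_of_le_of_lt (this y hy) hc'c
  refine ⟨G, hcont, hGa, hGb, hGu, ?_, ?_⟩
  · intro x hx hcx
    haveI := hne x
    exact Tendsto.limsup_eq hcx
  · intro h hh hle x
    haveI := hne x
    have : Tendsto h (𝓝[U] x) (𝓝 (h x)) := (hh.tendsto x).mono_left nhdsWithin_le_nhds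
    calc G x ≤ limsup h (𝓝[U] x) := by
          refine limsup_le_limsup ?_ (hcob x) this.isBoundedUnder_le
          filter_upwards [self_mem_nhdsWithin] with y hy using hle y hy
      _ = h x := this.limsup_eq

lemma le_on_dense {Λ : Type*} [TopologicalSpace Λ] {p q : Λ → ℝ}
    (hp : Continuous p) (hq : Continuous q) {D : Set Λ} (hD : Dense D)
    (h : ∀ x ∈ D, p x ≤ q x) (x : Λ) : p x ≤ q x :=
  closure_minimal (fun y hy => h y hy) (isClosed_le hp hq) (hD x)

lemma compress {Λ : Type*} [TopologicalSpace Λ] [ExtremallyDisconnected Λ]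
    {p : Λ → ℝ} {Wp : Set Λ} (hp : IsSelfAdjointFn p Wp) :
    ∃ g : Λ → ℝ, Continuous g ∧ (∀ x, -(Real.pi/2) ≤ g x) ∧ (∀ x, g x ≤ Real.pi/2) ∧
      (∀ x ∈ Wpᶜ, g x = Real.arctan (p x)) := by
  have hcOn : ContinuousOn (fun x => Real.arctan (p x)) Wpᶜ :=
    Real.continuous_arctan.comp_continuousOn hp.contOn
  obtain ⟨G, hGc, hGa, hGb, -, hGe, -⟩ :=
    envelope_spec (U := Wpᶜ) hp.dense_compl (fun x => Real.arctan (p x))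
      (a := -(Real.pi/2)) (b := Real.pi/2)
      (fun x _ => (Real.arctan_mem_Ioo (p x)).1.le)
      (fun x _ => (Real.arctan_mem_Ioo (p x)).2.le)
      (fun c => by
        have : {x | x ∈ Wpᶜ ∧ c < Real.arctan (p x)}
            = Wpᶜ ∩ (fun x => Real.arctan (p x)) ⁻¹' Ioi c := by
          ext x; simp [and_comm]
        rw [this]
        exact hcOn.isOpen_inter_preimage hp.isOpen_compl isOpen_Ioi)
  exact ⟨G, hGc, hGa, hGb, fun x hx => hGe x hx (hcOn x hx)⟩

/-- Proposition 42 (function level): a sequence of self-adjoint functions on `Λ` admitting an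
upper bound admits a least upper bound, where `(f, W_f) ≤ (g, W_g)` means `f x ≤ g x` for all
`x ∈ (Λ∖W_f) ∩ (Λ∖W_g)`. -/
theorem selfAdjointFn_exists_lub {Λ : Type*} [TopologicalSpace Λ]
    [CompactSpace Λ] [T2Space Λ] [ExtremallyDisconnected Λ] [Nonempty Λ]
    (f : ℕ → Λ → ℝ) (W : ℕ → Set Λ) (hf : ∀ n, IsSelfAdjointFn (f n) (W n))
    (f₀ : Λ → ℝ) (W₀ : Set Λ) (hf₀ : IsSelfAdjointFn f₀ W₀)
    (hub : ∀ n, ∀ x ∈ (W n)ᶜ ∩ W₀ᶜ, f n x ≤ f₀ x) :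
    ∃ (F : Λ → ℝ) (WF : Set Λ), IsSelfAdjointFn F WF ∧
      (∀ n, ∀ x ∈ (W n)ᶜ ∩ WFᶜ, f n x ≤ F x) ∧
      ∀ (h : Λ → ℝ) (Wh : Set Λ), IsSelfAdjointFn h Wh →
        (∀ n, ∀ x ∈ (W n)ᶜ ∩ Whᶜ, f n x ≤ h x) →
        ∀ x ∈ WFᶜ ∩ Whᶜ, F x ≤ h x := by
  classical
  choose g hgc hga hgb hge using fun n => compress (hf n)
  obtain ⟨g₀, hg₀c, hg₀a, hg₀b, hg₀e⟩ := compress hf₀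
  set u : Λ → ℝ := fun x => ⨆ n, g n x with hu
  have hbdd : ∀ x, BddAbove (Set.range fun n => g n x) := fun x =>
    ⟨Real.pi / 2, by rintro _ ⟨n, rfl⟩; exact hgb n x⟩
  have hgu : ∀ n x, g n x ≤ u x := fun n x => le_ciSup (hbdd x) n
  have hub' : ∀ x, u x ≤ Real.pi / 2 := fun x => ciSup_le fun n => hgb n x
  have hua' : ∀ x, -(Real.pi / 2) ≤ u x := fun x => le_trans (hga 0 x) (hgu 0 x)
  have hlscu : ∀ c : ℝ, IsOpen {x | x ∈ (Set.univ : Set Λ) ∧ c < u x} := by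
    intro c
    have : {x | x ∈ (Set.univ : Set Λ) ∧ c < u x} = ⋃ n, {x | c < g n x} := by
      ext x; simp [hu, lt_ciSup_iff (hbdd x)]
    rw [this]
    exact isOpen_iUnion fun n => isOpen_lt continuous_const (hgc n)
  obtain ⟨G, hGc, hGa, hGb, hGu, -, hGleast⟩ :=
    envelope_spec dense_univ u (fun x _ => hua' x) (fun x _ => hub' x) hlscu
  have hGn : ∀ n x, g n x ≤ G x := fun n x => (hgu n x).trans (hGu x trivial)
  have hGle : ∀ h : Λ → ℝ, Continuous h → (∀ n x, g n x ≤ h x) → ∀ x, G x ≤ h x :=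
    fun h hc hle x => hGleast h hc (fun y _ => ciSup_le fun n => hle n y) x
  have hg0n : ∀ n x, g n x ≤ g₀ x := by
    intro n
    refine le_on_dense (hgc n) hg₀c
      (((hf n).dense_compl).inter_of_isOpen_left hf₀.dense_compl (hf n).isOpen_compl) ?_
    intro x hx
    rw [hge n x hx.1, hg₀e x hx.2]
    exact Real.arctan_strictMono.monotone (hub n x hx)
  have hGg₀ : ∀ x, G x ≤ g₀ x := hGle g₀ hg₀c hg0n
  set S : Set Λ := G ⁻¹' Set.Ioo (-(Real.pi / 2)) (Real.pi / 2) with hS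
  have hSc : Sᶜᶜ = S := compl_compl S
  have hSopen : IsOpen S := IsOpen.preimage hGc isOpen_Ioo
  have hSdense : Dense S := by
    refine Dense.mono ?_ (((hf 0).dense_compl).inter_of_isOpen_left hf₀.dense_compl
      (hf 0).isOpen_compl)
    intro x hx
    constructor
    · calc -(Real.pi / 2) < Real.arctan (f 0 x) := (Real.arctan_mem_Ioo _).1
        _ = g 0 x := (hge 0 x hx.1).symm
        _ ≤ G x := hGn 0 x
    · calc G x ≤ g₀ x := hGg₀ x
        _ = Real.arctan (f₀ x) := hg₀e x hx.2
        _ < Real.pi / 2 := (Real.arctan_mem_Ioo _).2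
  refine ⟨fun x => Real.tan (G x), Sᶜ, ⟨by rw [hSc]; exact hSopen, by rw [hSc]; exact hSdense,
    ?_, ?_⟩, ?_, ?_⟩
  · -- continuity on S
    rw [hSc]
    intro x hx
    exact ((Real.continuousAt_tan.mpr (Real.cos_pos_of_mem_Ioo hx).ne').comp
      hGc.continuousAt).continuousWithinAt
  · -- blow-up at points of Sᶜ
    intro y hy
    rw [hSc]
    have hbase : Tendsto G (𝓝[S] y) (𝓝 (G y)) := (hGc.tendsto y).mono_left nhdsWithin_le_nhds
    have hev : ∀ᶠ x in 𝓝[S] y, G x ∈ Set.Ioo (-(Real.pi / 2)) (Real.pi / 2) :=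
      eventually_mem_nhdsWithin.mono fun x hx => hx
    have hcases : G y = -(Real.pi / 2) ∨ G y = Real.pi / 2 := by
      have h1 := hGa y; have h2 := hGb y
      rcases eq_or_lt_of_le h1 with h | h
      · exact Or.inl h.symm
      · rcases eq_or_lt_of_le h2 with h' | h'
        · exact Or.inr h'
        · exact absurd ⟨h, h'⟩ hy
    rcases hcases with h | h
    · have : Tendsto G (𝓝[S] y) (𝓝[>] (-(Real.pi / 2))) := by
        rw [tendsto_nhdsWithin_iff]
        exact ⟨h ▸ hbase, hev.mono fun x hx => hx.1⟩
      exact tendsto_abs_atBot_atTop.comp (Real.tendsto_tan_neg_pi_div_two.comp this)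
    · have : Tendsto G (𝓝[S] y) (𝓝[<] (Real.pi / 2)) := by
        rw [tendsto_nhdsWithin_iff]
        exact ⟨h ▸ hbase, hev.mono fun x hx => hx.2⟩
      exact tendsto_abs_atTop_atTop.comp (Real.tendsto_tan_pi_div_two.comp this)
  · -- F is an upper bound
    rintro n x ⟨hx1, hx2⟩
    rw [hSc] at hx2
    have h1 : Real.arctan (f n x) ∈ Set.Ioo (-(Real.pi / 2)) (Real.pi / 2) :=
      Real.arctan_mem_Ioo _
    calc f n x = Real.tan (Real.arctan (f n x)) := (Real.tan_arctan _).symm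
      _ ≤ Real.tan (G x) := Real.strictMonoOn_tan.monotoneOn h1 hx2
          (by rw [← hge n x hx1]; exact hGn n x)
  · -- F is the least upper bound
    rintro h Wh hh hhub x ⟨hx1, hx2⟩
    rw [hSc] at hx1
    obtain ⟨H, hHc, hHa, hHb, hHe⟩ := compress hh
    have hgnH : ∀ n x, g n x ≤ H x := by
      intro n
      refine le_on_dense (hgc n) hHc
        (((hf n).dense_compl).inter_of_isOpen_left hh.dense_compl (hf n).isOpen_compl) ?_
      intro y hy
      rw [hge n y hy.1, hHe y hy.2]
      exact Real.arctan_strictMono.monotone (hhub n y hy)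
    have hGH : ∀ x, G x ≤ H x := hGle H hHc hgnH
    have hHx : H x = Real.arctan (h x) := hHe x hx2
    calc Real.tan (G x) ≤ Real.tan (H x) :=
          Real.strictMonoOn_tan.monotoneOn hx1 (hHx ▸ Real.arctan_mem_Ioo _) (hGH x)
      _ = h x := by rw [hHx, Real.tan_arctan]
end
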